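/- arXiv:1202.0937 — 4 statements merged into one kernel-verified Lean document; each statement's English description precedes it below -/
import Mathlib

section
/- Union-bound core of the compressive binary search analysis: let n = 2^{s₀} with s₀ ≥ 1 an integer, let m ≥ 2·s₀ be an integer, let μ > 0, and for s = 1,…,s₀ set m_s = ⌊(m − s₀)·2^{−s}⌋ + 1. Then ∑_{s=1}^{s₀} gaussianReal (2^{(s−1)/2}·m_s·μ/√n) m_s ({y ∈ ℝ : y < 0}) ≤ (s₀/2)·exp(−μ²·m/(8n)). -/
open MeasureTheory ProbabilityTheory

lemma gaussianPDFReal_Iio_zero_centered (v : NNReal) (hv : v ≠ 0) :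
    ∫ x in Set.Iio (0:ℝ), gaussianPDFReal 0 v x = 1 / 2 := by
  have htot := integral_gaussianPDFReal_eq_one 0 hv
  have hint := integrable_gaussianPDFReal 0 v
  have hsplit := intervalIntegral.integral_Iio_add_Ici (b := (0:ℝ)) (μ := volume)
    hint.integrableOn hint.integrableOn
  have hIci : ∫ x in Set.Ici (0:ℝ), gaussianPDFReal 0 v x
      = ∫ x in Set.Ioi (0:ℝ), gaussianPDFReal 0 v x := integral_Ici_eq_integral_Ioi
  have heven : ∀ x : ℝ, gaussianPDFReal 0 v (-x) = gaussianPDFReal 0 v x := by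
    intro x; simp [gaussianPDFReal, neg_sq]
  have hneg := integral_comp_neg_Ioi (0:ℝ) (gaussianPDFReal 0 v)
  simp only [heven, neg_zero] at hneg
  rw [integral_Iic_eq_integral_Iio] at hneg
  rw [htot] at hsplit
  linarith

lemma gaussian_tail_half (θ : ℝ) (hθ : 0 ≤ θ) (v : NNReal) (hv : v ≠ 0) :
    ∫ x in Set.Iio (0:ℝ), gaussianPDFReal θ v x
      ≤ Real.exp (-θ ^ 2 / (2 * v)) * (1 / 2) := by
  have hv0 : (0:ℝ) < (v:ℝ) := by exact_mod_cast hv.bot_lt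
  have hmono : ∀ x ∈ Set.Iio (0:ℝ),
      gaussianPDFReal θ v x ≤ Real.exp (-θ ^ 2 / (2 * v)) * gaussianPDFReal 0 v x := by
    intro x hx
    simp only [Set.mem_Iio] at hx
    have h1 : Real.exp (-(x - θ) ^ 2 / (2 * (v:ℝ)))
        ≤ Real.exp (-θ ^ 2 / (2 * (v:ℝ))) * Real.exp (-x ^ 2 / (2 * (v:ℝ))) := by
      rw [← Real.exp_add, ← add_div]
      apply Real.exp_le_exp.2
      rw [div_le_div_iff_of_pos_right (by positivity)]
      nlinarith
    show (Real.sqrt (2 * Real.pi * (v:ℝ)))⁻¹ * Real.exp (-(x - θ) ^ 2 / (2 * (v:ℝ)))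
        ≤ Real.exp (-θ ^ 2 / (2 * (v:ℝ)))
          * ((Real.sqrt (2 * Real.pi * (v:ℝ)))⁻¹ * Real.exp (-(x - 0) ^ 2 / (2 * (v:ℝ))))
    rw [sub_zero]
    calc (Real.sqrt (2 * Real.pi * (v:ℝ)))⁻¹ * Real.exp (-(x - θ) ^ 2 / (2 * (v:ℝ)))
        ≤ (Real.sqrt (2 * Real.pi * (v:ℝ)))⁻¹
            * (Real.exp (-θ ^ 2 / (2 * (v:ℝ))) * Real.exp (-x ^ 2 / (2 * (v:ℝ)))) :=
          mul_le_mul_of_nonneg_left h1 (by positivity)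
      _ = Real.exp (-θ ^ 2 / (2 * (v:ℝ)))
            * ((Real.sqrt (2 * Real.pi * (v:ℝ)))⁻¹ * Real.exp (-x ^ 2 / (2 * (v:ℝ)))) := by
          ring
  calc ∫ x in Set.Iio (0:ℝ), gaussianPDFReal θ v x
      ≤ ∫ x in Set.Iio (0:ℝ),
          Real.exp (-θ ^ 2 / (2 * v)) * gaussianPDFReal 0 v x := by
        apply setIntegral_mono_on
          (integrable_gaussianPDFReal θ v).integrableOn
          (((integrable_gaussianPDFReal 0 v).const_mul _).integrableOn)
          measurableSet_Iio hmono
    _ = Real.exp (-θ ^ 2 / (2 * v)) * (1 / 2) := by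
        rw [integral_const_mul, gaussianPDFReal_Iio_zero_centered v hv]

/-- **Union-bound core of the compressive binary search analysis.**
Let `n = 2 ^ s₀` with `s₀ ≥ 1`, let `m ≥ 2·s₀`, let `μ > 0`, and for `s = 1, …, s₀` set
`mₛ = ⌊(m - s₀) · 2⁻ˢ⌋ + 1`.  Then the sum over the stages of the probabilities that the
stage decision statistic (distributed as a Gaussian with mean `2^{(s-1)/2}·mₛ·μ/√n` and
variance `mₛ`) is negative is at most `(s₀ / 2) · exp (-μ² m / (8 n))`. -/
theorem compressive_binary_search_union_bound (s₀ m n : ℕ) (hs₀ : 1 ≤ s₀)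
    (hn : n = 2 ^ s₀) (hm : 2 * s₀ ≤ m) (μ : ℝ) (hμ : 0 < μ)
    (ms : ℕ → ℕ) (hms : ∀ s, ms s = (m - s₀) / 2 ^ s + 1) :
    ∑ s ∈ Finset.Icc 1 s₀,
        gaussianReal ((2 : ℝ) ^ (((s : ℝ) - 1) / 2) * (ms s : ℝ) * μ / Real.sqrt n)
          (ms s : NNReal) {y : ℝ | y < 0} ≤
      ENNReal.ofReal (((s₀ : ℝ) / 2) * Real.exp (-(μ ^ 2 * (m : ℝ)) / (8 * n))) := by
  have hn0 : (0:ℝ) < (n:ℝ) := by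
    have : 0 < n := by rw [hn]; positivity
    exact_mod_cast this
  set C : ℝ := Real.exp (-(μ ^ 2 * (m : ℝ)) / (8 * n)) with hC
  have hterm : ∀ s ∈ Finset.Icc 1 s₀,
      gaussianReal ((2 : ℝ) ^ (((s : ℝ) - 1) / 2) * (ms s : ℝ) * μ / Real.sqrt n)
          (ms s : NNReal) {y : ℝ | y < 0} ≤ ENNReal.ofReal ((1/2) * C) := by
    intro s hs
    simp only [Finset.mem_Icc] at hs
    have hms1 : 1 ≤ ms s := by rw [hms s]; exact Nat.le_add_left 1 _
    have hvne : ((ms s : NNReal)) ≠ 0 :=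
      Nat.cast_ne_zero.mpr (Nat.one_le_iff_ne_zero.mp hms1)
    have hmsR : (0:ℝ) < (ms s : ℝ) := by exact_mod_cast hms1
    set θ : ℝ := (2 : ℝ) ^ (((s : ℝ) - 1) / 2) * (ms s : ℝ) * μ / Real.sqrt n with hθdef
    have hθ0 : 0 ≤ θ := by
      have h2 : (0:ℝ) < (2 : ℝ) ^ (((s : ℝ) - 1) / 2) := Real.rpow_pos_of_pos (by norm_num) _
      apply div_nonneg _ (Real.sqrt_nonneg _)
      positivity
    have hset : {y : ℝ | y < 0} = Set.Iio (0:ℝ) := rfl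
    rw [hset, gaussianReal_apply_eq_integral _ hvne]
    apply ENNReal.ofReal_le_ofReal
    calc ∫ x in Set.Iio (0:ℝ), gaussianPDFReal θ (ms s : NNReal) x
        ≤ Real.exp (-θ ^ 2 / (2 * ((ms s : NNReal) : ℝ))) * (1/2) :=
          gaussian_tail_half θ hθ0 _ hvne
      _ ≤ C * (1/2) := by
          apply mul_le_mul_of_nonneg_right _ (by norm_num)
          rw [hC]
          apply Real.exp_le_exp.2
          have hsq : Real.sqrt n ^ 2 = (n:ℝ) := Real.sq_sqrt hn0.le
          have hsqpos : (0:ℝ) < Real.sqrt n := Real.sqrt_pos.2 hn0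
          have hpow : ((2 : ℝ) ^ (((s : ℝ) - 1) / 2)) ^ 2
              = (2:ℝ) ^ (s:ℕ) / 2 := by
            rw [← Real.rpow_natCast ((2:ℝ) ^ (((s : ℝ) - 1) / 2)) 2,
              ← Real.rpow_mul (by norm_num)]
            have he : ((s : ℝ) - 1) / 2 * ((2:ℕ):ℝ) = (s:ℝ) - 1 := by push_cast; ring
            rw [he, Real.rpow_sub (by norm_num), Real.rpow_natCast, Real.rpow_one]
          have hθsq : θ ^ 2 / (2 * (((ms s : NNReal)) : ℝ))
              = μ ^ 2 * ((2:ℝ) ^ (s:ℕ) * (ms s : ℝ)) / (4 * n) := by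
            rw [hθdef]
            rw [div_pow, mul_pow, mul_pow, hpow, hsq]
            push_cast
            field_simp
            ring
          rw [neg_div, neg_div, neg_le_neg_iff, hθsq]
          have hkey : (m:ℝ) / 2 ≤ (2:ℝ) ^ (s:ℕ) * (ms s : ℝ) := by
            have h1 : m - s₀ < 2 ^ s * ms s := by
              rw [hms s]
              exact Nat.lt_mul_div_succ _ (Nat.pow_pos (by norm_num))
            have h2 : m - s₀ + 1 ≤ ms s * 2 ^ s := by rw [mul_comm]; exact h1
            have h3 : m ≤ 2 * (ms s * 2 ^ s) := by omega
            have h4 : (m:ℝ) ≤ 2 * ((ms s * 2 ^ s : ℕ):ℝ) := by exact_mod_cast h3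
            push_cast at h4
            linarith
          rw [div_le_div_iff₀ (by positivity) (by positivity)]
          have hμ2 : (0:ℝ) < μ ^ 2 := by positivity
          calc μ ^ 2 * (m:ℝ) * (4 * n) = μ ^ 2 * ((m:ℝ)/2) * (8 * n) := by ring
            _ ≤ μ ^ 2 * ((2:ℝ) ^ (s:ℕ) * (ms s : ℝ)) * (8 * n) := by
                apply mul_le_mul_of_nonneg_right _ (by positivity)
                exact mul_le_mul_of_nonneg_left hkey hμ2.le
      _ = (1/2) * C := by ring
  calc ∑ s ∈ Finset.Icc 1 s₀,
        gaussianReal ((2 : ℝ) ^ (((s : ℝ) - 1) / 2) * (ms s : ℝ) * μ / Real.sqrt n)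
          (ms s : NNReal) {y : ℝ | y < 0}
      ≤ ∑ s ∈ Finset.Icc 1 s₀, ENNReal.ofReal ((1/2) * C) := Finset.sum_le_sum hterm
    _ = (s₀ : ENNReal) * ENNReal.ofReal ((1/2) * C) := by
        rw [Finset.sum_const, Nat.card_Icc]
        simp [nsmul_eq_mul]
    _ = ENNReal.ofReal (((s₀ : ℝ) / 2) * C) := by
        rw [← ENNReal.ofReal_natCast s₀, ← ENNReal.ofReal_mul (by positivity)]
        ring_nf
end

section
/- Theorem (compressive binary search): let n = 2^{s₀} with s₀ ≥ 1 an integer, let the measurement budget m satisfy m ≥ 2·s₀, let μ > 0, and let x ∈ ℝⁿ equal μ at a single index j* ∈ {1,…,n} and 0 elsewhere. Run the compressive binary search: on a probability space carrying independent standard Gaussian random variables z^{(s)}_i (s = 1,…,s₀, i = 1,…,m_s), define recursively l_1 = 1 and, for s = 1,…,s₀: the current dyadic interval is J^{(s)} = {l_s,…,l_s + 2^{s₀−s+1} − 1} with left half J_1^{(s)} = {l_s,…,l_s + 2^{s₀−s} − 1} and right half J_2^{(s)}; u^{(s)} ∈ ℝⁿ has entries 2^{−(s₀−s+1)/2} on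 J_1^{(s)}, −2^{−(s₀−s+1)/2} on J_2^{(s)}, and 0 elsewhere; w^{(s)} = m_s·⟨u^{(s)}, x⟩ + ∑_{i=1}^{m_s} z^{(s)}_i; and l_{s+1} = l_s if w^{(s)} > 0, while l_{s+1} = l_s + 2^{s₀−s} otherwise. Let ĵ = l_{s₀+1} be the output. Then the probability of error satisfies P(ĵ ≠ j*) ≤ (s₀/2)·exp(−μ²·m/(8n)). -/
open MeasureTheory ProbabilityTheory Real NNReal

lemma cbs_pdf_conv (a b : ℝ≥0) (ha : a ≠ 0) (hb : b ≠ 0) (t x : ℝ) :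
    gaussianPDFReal 0 a x * gaussianPDFReal x b t =
      gaussianPDFReal 0 (a + b) t * gaussianPDFReal ((a : ℝ) * t / (a + b)) (a * b / (a + b)) x := by
  have hA : (0:ℝ) < a := lt_of_le_of_ne (a.coe_nonneg) (by exact_mod_cast (Ne.symm ha))
  have hB : (0:ℝ) < b := lt_of_le_of_ne (b.coe_nonneg) (by exact_mod_cast (Ne.symm hb))
  have hC : (0:ℝ) < (a:ℝ) + b := by linarith
  have hpi : (0:ℝ) < 2 * π := by positivity
  simp only [gaussianPDFReal_def, NNReal.coe_add, NNReal.coe_div, NNReal.coe_mul]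
  rw [mul_mul_mul_comm, mul_mul_mul_comm ((√(2 * π * ((a:ℝ)+b)))⁻¹)]
  congr 1
  · rw [← mul_inv, ← mul_inv, ← Real.sqrt_mul (by positivity), ← Real.sqrt_mul (by positivity)]
    congr 1
    field_simp
  · rw [← Real.exp_add, ← Real.exp_add]
    congr 1
    field_simp
    ring

lemma cbs_gaussian_conv (a b : NNReal) (ha : a ≠ 0) (hb : b ≠ 0) :
    Measure.map (fun p : ℝ × ℝ => p.1 + p.2)
      ((gaussianReal 0 a).prod (gaussianReal 0 b)) = gaussianReal 0 (a + b) := by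
  have hab : a + b ≠ 0 := by positivity
  have hab' : a * b / (a + b) ≠ 0 := by positivity
  ext s hs
  rw [Measure.map_apply measurable_add hs, Measure.prod_apply (hs.preimage measurable_add)]
  have h1 : ∀ x : ℝ, (gaussianReal 0 b) (Prod.mk x ⁻¹' ((fun p : ℝ × ℝ => p.1 + p.2) ⁻¹' s))
      = ∫⁻ t in s, gaussianPDF x b t := by
    intro x
    have hpre : Prod.mk x ⁻¹' ((fun p : ℝ × ℝ => p.1 + p.2) ⁻¹' s) = (fun y => x + y) ⁻¹' s := rfl
    rw [hpre, ← Measure.map_apply (measurable_const_add x) hs, gaussianReal_map_const_add,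
      zero_add, gaussianReal_apply x hb s]
  simp_rw [h1]
  have hmeas2 : Measurable (fun q : ℝ × ℝ => gaussianPDF q.1 b q.2) := by
    refine Measurable.ennreal_ofReal ?_
    simp only [gaussianPDFReal_def]
    fun_prop
  have hFmeas : Measurable (Function.uncurry fun x t => s.indicator (gaussianPDF x b) t) := by
    have heq : (Function.uncurry fun x t => s.indicator (gaussianPDF x b) t)
        = (Set.univ ×ˢ s).indicator (fun q : ℝ × ℝ => gaussianPDF q.1 b q.2) := by
      ext ⟨x, t⟩
      by_cases h : t ∈ s <;> simp [Function.uncurry, Set.indicator_apply, h]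
    rw [heq]
    exact hmeas2.indicator (MeasurableSet.univ.prod hs)
  have hswap : ∫⁻ x, ∫⁻ t in s, gaussianPDF x b t ∂(volume) ∂(gaussianReal 0 a)
      = ∫⁻ t in s, ∫⁻ x, gaussianPDF x b t ∂(gaussianReal 0 a) ∂(volume) := by
    calc ∫⁻ x, ∫⁻ t in s, gaussianPDF x b t ∂(volume) ∂(gaussianReal 0 a)
        = ∫⁻ x, ∫⁻ t, s.indicator (gaussianPDF x b) t ∂(volume) ∂(gaussianReal 0 a) := by
          simp_rw [lintegral_indicator hs]
      _ = ∫⁻ t, ∫⁻ x, s.indicator (gaussianPDF x b) t ∂(gaussianReal 0 a) ∂(volume) :=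
          lintegral_lintegral_swap hFmeas.aemeasurable
      _ = ∫⁻ t, s.indicator (fun t => ∫⁻ x, gaussianPDF x b t ∂(gaussianReal 0 a)) t ∂(volume) := by
          congr 1
          ext t
          by_cases h : t ∈ s <;> simp [h]
      _ = ∫⁻ t in s, ∫⁻ x, gaussianPDF x b t ∂(gaussianReal 0 a) ∂(volume) := by
          rw [lintegral_indicator hs]
  rw [hswap, gaussianReal_apply 0 hab s]
  refine setLIntegral_congr_fun hs (fun t _ => ?_)
  have hxmeas : Measurable fun x : ℝ => gaussianPDF x b t := by
    refine Measurable.ennreal_ofReal ?_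
    simp only [gaussianPDFReal_def]
    fun_prop
  rw [gaussianReal_of_var_ne_zero 0 ha,
    lintegral_withDensity_eq_lintegral_mul _ (measurable_gaussianPDF 0 a) hxmeas]
  have hpt : ∀ x : ℝ, (gaussianPDF 0 a * fun x => gaussianPDF x b t) x
      = gaussianPDF 0 (a + b) t * gaussianPDF ((a : ℝ) * t / (a + b)) (a * b / (a + b)) x := by
    intro x
    simp only [Pi.mul_apply, gaussianPDF]
    rw [← ENNReal.ofReal_mul (gaussianPDFReal_nonneg 0 a x),
      ← ENNReal.ofReal_mul (gaussianPDFReal_nonneg 0 (a + b) t), cbs_pdf_conv a b ha hb t x]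
  simp_rw [hpt]
  rw [lintegral_const_mul _ (measurable_gaussianPDF _ _),
    lintegral_gaussianPDF_eq_one _ hab', mul_one]

lemma cbs_map_sum_gaussian {Ω : Type*} [MeasurableSpace Ω] (P : Measure Ω)
    [IsProbabilityMeasure P] {ι : Type*} (z : ι → Ω → ℝ) (hmeas : ∀ p, Measurable (z p))
    (hind : iIndepFun z P)
    (hlaw : ∀ p, Measure.map (z p) P = gaussianReal 0 1) (T : Finset ι) :
    Measure.map (fun ω => ∑ p ∈ T, z p ω) P = gaussianReal 0 (T.card : NNReal) := by
  classical
  induction T using Finset.induction_on with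
  | empty =>
      simp only [Finset.sum_empty, Finset.card_empty, Nat.cast_zero, gaussianReal_zero_var]
      simp [Measure.map_const]
  | @insert p T hp ih =>
      rcases eq_or_ne T ∅ with rfl | hT
      · simpa using hlaw p
      have hcard : (T.card : NNReal) ≠ 0 := by
        simp [Finset.card_eq_zero, hT]
      have hY : Measurable fun ω => ∑ q ∈ T, z q ω := by
        exact Finset.measurable_sum _ fun q _ => hmeas q
      have hIndep : IndepFun (z p) (fun ω => ∑ q ∈ T, z q ω) P := by
        have h := (hind.indepFun_finsetSum_of_notMem hmeas hp).symm
        have he : (∑ j ∈ T, z j) = fun ω => ∑ q ∈ T, z q ω := by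
          funext ω; simp [Finset.sum_apply]
        rwa [he] at h
      have hpair : Measure.map (fun ω => (z p ω, ∑ q ∈ T, z q ω)) P
          = (Measure.map (z p) P).prod (Measure.map (fun ω => ∑ q ∈ T, z q ω) P) :=
        (indepFun_iff_map_prod_eq_prod_map_map (hmeas p).aemeasurable hY.aemeasurable).mp hIndep
      have hsum : (fun ω => ∑ q ∈ insert p T, z q ω)
          = (fun q : ℝ × ℝ => q.1 + q.2) ∘ (fun ω => (z p ω, ∑ q ∈ T, z q ω)) := by
        funext ω
        simp [Finset.sum_insert hp]
      rw [hsum, ← Measure.map_map measurable_add ((hmeas p).prodMk hY), hpair, hlaw p, ih,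
        cbs_gaussian_conv 1 _ one_ne_zero hcard]
      congr 1
      rw [Finset.card_insert_of_notMem hp]
      push_cast
      ring

lemma cbs_neg_map (v : NNReal) :
    Measure.map (fun x : ℝ => -x) (gaussianReal 0 v) = gaussianReal 0 v := by
  have h := gaussianReal_map_const_mul (μ := 0) (v := v) (-1)
  have he : (fun x : ℝ => (-1 : ℝ) * x) = fun x : ℝ => -x := by funext x; ring
  rw [he] at h
  rw [h]
  congr 1
  · ring
  · ext
    simp

lemma cbs_half (v : NNReal) (hv : v ≠ 0) : gaussianReal 0 v (Set.Ici 0) = 1 / 2 := by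
  have h1 : gaussianReal 0 v (Set.Iic 0) = gaussianReal 0 v (Set.Ici 0) := by
    conv_rhs => rw [← cbs_neg_map v]
    rw [Measure.map_apply measurable_neg measurableSet_Ici]
    congr 1
    ext x
    simp
  have h0 : gaussianReal 0 v ({0} : Set ℝ) = 0 := by
    rw [gaussianReal_apply 0 hv, setLIntegral_measure_zero _ _ Real.volume_singleton]
  have hU : gaussianReal 0 v (Set.Ici 0 ∪ Set.Iic 0) = 1 := by
    have : Set.Ici (0:ℝ) ∪ Set.Iic 0 = Set.univ := by
      ext x; simp [le_total]
    rw [this]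
    simp
  have key := measure_union_add_inter (μ := gaussianReal 0 v) (Set.Ici (0:ℝ)) (measurableSet_Iic (a := (0:ℝ)))
  rw [hU, Set.Ici_inter_Iic, Set.Icc_self, h0, add_zero, h1] at key
  rw [ENNReal.eq_div_iff (two_ne_zero) (ENNReal.ofNat_ne_top), two_mul]
  exact key.symm

lemma cbs_tail (v : NNReal) (hv : v ≠ 0) (t : ℝ) (ht : 0 ≤ t) :
    gaussianReal 0 v (Set.Ici t) ≤ ENNReal.ofReal ((1 / 2) * Real.exp (-(t ^ 2) / (2 * v))) := by
  have hv' : (0 : ℝ) < v := lt_of_le_of_ne v.coe_nonneg (by exact_mod_cast (Ne.symm hv))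
  have key : ∀ x ∈ Set.Ici t, gaussianPDF 0 v x
      ≤ ENNReal.ofReal (Real.exp (-(t ^ 2) / (2 * v))) * gaussianPDF t v x := by
    intro x hx
    rw [Set.mem_Ici] at hx
    simp only [gaussianPDF_def]
    rw [← ENNReal.ofReal_mul (Real.exp_nonneg (-(t ^ 2) / (2 * (v:ℝ))))]
    refine ENNReal.ofReal_le_ofReal ?_
    simp only [gaussianPDFReal_def]
    have hA : (0:ℝ) ≤ (Real.sqrt (2 * π * (v:ℝ)))⁻¹ := by positivity
    have hE : rexp (-(x - 0) ^ 2 / (2 * (v:ℝ))) ≤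
        rexp (-t ^ 2 / (2 * (v:ℝ))) * rexp (-(x - t) ^ 2 / (2 * (v:ℝ))) := by
      rw [← Real.exp_add]
      refine Real.exp_le_exp.mpr ?_
      rw [← add_div]
      have h2v : (0:ℝ) < 2 * (v:ℝ) := by positivity
      rw [div_le_div_iff₀ h2v h2v]
      nlinarith [mul_nonneg (mul_nonneg ht (sub_nonneg.mpr hx)) (le_of_lt h2v), sq_nonneg (x - t)]
    calc (Real.sqrt (2 * π * (v:ℝ)))⁻¹ * rexp (-(x - 0) ^ 2 / (2 * (v:ℝ)))
        ≤ (Real.sqrt (2 * π * (v:ℝ)))⁻¹ *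
            (rexp (-t ^ 2 / (2 * (v:ℝ))) * rexp (-(x - t) ^ 2 / (2 * (v:ℝ)))) :=
          mul_le_mul_of_nonneg_left hE hA
      _ = rexp (-t ^ 2 / (2 * (v:ℝ))) *
            ((Real.sqrt (2 * π * (v:ℝ)))⁻¹ * rexp (-(x - t) ^ 2 / (2 * (v:ℝ)))) := by ring
  calc gaussianReal 0 v (Set.Ici t)
      = ∫⁻ x in Set.Ici t, gaussianPDF 0 v x := gaussianReal_apply 0 hv _
    _ ≤ ∫⁻ x in Set.Ici t, ENNReal.ofReal (Real.exp (-(t ^ 2) / (2 * v))) * gaussianPDF t v x :=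
        setLIntegral_mono ((measurable_gaussianPDF t v).const_mul _) key
    _ = ENNReal.ofReal (Real.exp (-(t ^ 2) / (2 * v))) * gaussianReal t v (Set.Ici t) := by
        rw [lintegral_const_mul _ (measurable_gaussianPDF _ _), gaussianReal_apply t hv]
    _ = ENNReal.ofReal (Real.exp (-(t ^ 2) / (2 * v))) * gaussianReal 0 v (Set.Ici 0) := by
        congr 1
        have hmap := gaussianReal_map_const_add (μ := 0) (v := v) t
        rw [zero_add] at hmap
        rw [← hmap, Measure.map_apply (measurable_const_add t) measurableSet_Ici]
        congr 1
        ext x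
        simp
    _ = ENNReal.ofReal (Real.exp (-(t ^ 2) / (2 * v))) * ENNReal.ofReal (1 / 2) := by
        rw [cbs_half v hv]
        norm_num [ENNReal.ofReal_div_of_pos]
    _ = ENNReal.ofReal ((1 / 2) * Real.exp (-(t ^ 2) / (2 * v))) := by
        rw [← ENNReal.ofReal_mul (Real.exp_nonneg _), mul_comm]

lemma cbs_tail_neg (v : NNReal) (hv : v ≠ 0) (t : ℝ) (ht : 0 ≤ t) :
    gaussianReal 0 v (Set.Iic (-t)) ≤ ENNReal.ofReal ((1 / 2) * Real.exp (-(t ^ 2) / (2 * v))) := by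
  have h1 : gaussianReal 0 v (Set.Iic (-t)) = gaussianReal 0 v (Set.Ici t) := by
    conv_lhs => rw [← cbs_neg_map v]
    rw [Measure.map_apply measurable_neg measurableSet_Iic]
    congr 1
    ext x
    simp
  rw [h1]
  exact cbs_tail v hv t ht

/-- **Compressive binary search theorem.**
Let `n = 2 ^ s₀` with `s₀ ≥ 1`, let the budget satisfy `m ≥ 2 s₀`, let `μ > 0` and let
`x ∈ ℝⁿ` equal `μ` at the single index `j* ∈ {1, …, n}` and `0` elsewhere.  On a
probability space carrying independent standard Gaussians `z (s, i)`, run the compressive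
binary search: `l 1 = 1`; at stage `s` the current dyadic interval starts at `l s`, the
sensing vector `u s` equals `2^{-(s₀-s+1)/2}` on the left half
`{l s, …, l s + 2^{s₀-s} - 1}`, `-2^{-(s₀-s+1)/2}` on the right half
`{l s + 2^{s₀-s}, …, l s + 2^{s₀-s+1} - 1}` and `0` elsewhere; the decision statistic is
`w s = mₛ ⟨u s, x⟩ + ∑_{i=1}^{mₛ} z (s, i)` where `mₛ = ⌊(m - s₀) 2⁻ˢ⌋ + 1`; and
`l (s+1) = l s` if `w s > 0`, `l (s+1) = l s + 2^{s₀-s}` otherwise.  Then the output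
`ĵ = l (s₀ + 1)` satisfies `P(ĵ ≠ j*) ≤ (s₀ / 2) · exp (-μ² m / (8 n))`. -/
theorem compressive_binary_search (s₀ m n : ℕ) (hs₀ : 1 ≤ s₀) (hn : n = 2 ^ s₀)
    (hm : 2 * s₀ ≤ m)
    (ms : ℕ → ℕ) (hms : ∀ s, ms s = (m - s₀) / 2 ^ s + 1)
    (μ : ℝ) (hμ : 0 < μ) (jstar : ℕ) (hjstar : jstar ∈ Finset.Icc 1 n)
    (x : ℕ → ℝ) (hx : ∀ j, x j = if j = jstar then μ else 0)
    {Ω : Type*} [MeasurableSpace Ω] (P : Measure Ω) [IsProbabilityMeasure P]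
    (z : ℕ × ℕ → Ω → ℝ) (hz_meas : ∀ p, Measurable (z p))
    (hz_indep : iIndepFun z P)
    (hz_law : ∀ p, Measure.map (z p) P = gaussianReal 0 1)
    (l : ℕ → Ω → ℕ) (u : ℕ → Ω → ℕ → ℝ) (w : ℕ → Ω → ℝ)
    (hl1 : ∀ ω, l 1 ω = 1)
    (hu : ∀ s ω j, u s ω j =
      if l s ω ≤ j ∧ j ≤ l s ω + 2 ^ (s₀ - s) - 1 then
        (2 : ℝ) ^ (-(((s₀ : ℝ) - (s : ℝ) + 1) / 2))
      else if l s ω + 2 ^ (s₀ - s) ≤ j ∧ j ≤ l s ω + 2 ^ (s₀ - s + 1) - 1 then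
        -((2 : ℝ) ^ (-(((s₀ : ℝ) - (s : ℝ) + 1) / 2)))
      else 0)
    (hw : ∀ s ω, w s ω =
      (ms s : ℝ) * (∑ j ∈ Finset.Icc 1 n, u s ω j * x j) +
        ∑ i ∈ Finset.Icc 1 (ms s), z (s, i) ω)
    (hlrec : ∀ s ∈ Finset.Icc 1 s₀, ∀ ω,
      l (s + 1) ω = if 0 < w s ω then l s ω else l s ω + 2 ^ (s₀ - s)) :
    P {ω | l (s₀ + 1) ω ≠ jstar} ≤
      ENNReal.ofReal (((s₀ : ℝ) / 2) * Real.exp (-(μ ^ 2 * (m : ℝ)) / (8 * n))) := by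
  classical
  obtain ⟨hj1, hjn⟩ := Finset.mem_Icc.mp hjstar
  have hs₀m : s₀ ≤ m := le_trans (by omega) hm
  -- the per-stage bound constant
  set q : ENNReal := ENNReal.ofReal ((1 / 2) * Real.exp (-(μ ^ 2 * (m : ℝ)) / (8 * n))) with hq
  -- σ-algebras
  set F : ℕ → MeasurableSpace Ω :=
    fun s => ⨆ p ∈ {r : ℕ × ℕ | r.1 < s}, MeasurableSpace.comap (z p) inferInstance with hF
  set G : ℕ → MeasurableSpace Ω :=
    fun s => ⨆ p ∈ {r : ℕ × ℕ | r.1 = s}, MeasurableSpace.comap (z p) inferInstance with hG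
  have h_le : ∀ p : ℕ × ℕ, MeasurableSpace.comap (z p) inferInstance ≤ ‹MeasurableSpace Ω› :=
    fun p => (hz_meas p).comap_le
  have hFle : ∀ s, F s ≤ ‹MeasurableSpace Ω› := fun s => iSup₂_le fun p _ => h_le p
  have hGle : ∀ s, G s ≤ ‹MeasurableSpace Ω› := fun s => iSup₂_le fun p _ => h_le p
  have hFmono : ∀ {s t : ℕ}, s ≤ t → F s ≤ F t := fun {s t} hst =>
    biSup_mono fun p hp => lt_of_lt_of_le hp hst
  have hzF : ∀ (p : ℕ × ℕ) (s : ℕ), p.1 < s → Measurable[F s] (z p) := fun p s hp =>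
    measurable_iff_comap_le.mpr
      (le_biSup (fun p : ℕ × ℕ => MeasurableSpace.comap (z p) inferInstance)
        (show p ∈ {r : ℕ × ℕ | r.1 < s} from hp))
  have hzG : ∀ (p : ℕ × ℕ) (s : ℕ), p.1 = s → Measurable[G s] (z p) := fun p s hp =>
    measurable_iff_comap_le.mpr
      (le_biSup (fun p : ℕ × ℕ => MeasurableSpace.comap (z p) inferInstance)
        (show p ∈ {r : ℕ × ℕ | r.1 = s} from hp))
  -- independence of F s and G s
  have hIndep : ∀ s : ℕ, Indep (F s) (G s) P := by
    intro s
    have h := indep_biSup_compl h_le hz_indep {r : ℕ × ℕ | r.1 = s}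
    refine (indep_of_indep_of_le_right h ?_).symm
    refine biSup_mono fun p hp => ?_
    simp only [Set.mem_setOf_eq] at hp
    simp only [Set.mem_compl_iff, Set.mem_setOf_eq]
    omega
  -- measurability of l s with respect to F s
  have hl_meas : ∀ s, 1 ≤ s → s ≤ s₀ + 1 → Measurable[F s] (l s) := by
    intro s hs1
    induction s, hs1 using Nat.le_induction with
    | base =>
        intro _
        have h1 : l 1 = fun _ => 1 := funext hl1
        rw [h1]
        exact measurable_const
    | succ s hs ih =>
        intro hs2
        have hss₀ : s ≤ s₀ := by omega
        have hls : Measurable[F (s + 1)] (l s) :=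
          (ih (by omega)).mono (hFmono (Nat.le_succ s)) le_rfl
        -- w s is measurable with respect to F (s+1)
        have hwm : Measurable[F (s + 1)] (w s) := by
          have hwfun : w s = fun ω => (ms s : ℝ) *
              (∑ j ∈ Finset.Icc 1 n,
                (if l s ω ≤ j ∧ j ≤ l s ω + 2 ^ (s₀ - s) - 1 then
                  (2 : ℝ) ^ (-(((s₀ : ℝ) - (s : ℝ) + 1) / 2))
                else if l s ω + 2 ^ (s₀ - s) ≤ j ∧ j ≤ l s ω + 2 ^ (s₀ - s + 1) - 1 then
                  -((2 : ℝ) ^ (-(((s₀ : ℝ) - (s : ℝ) + 1) / 2)))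
                else 0) * x j) +
              ∑ i ∈ Finset.Icc 1 (ms s), z (s, i) ω := by
            funext ω
            rw [hw]
            congr 1
            congr 1
            exact Finset.sum_congr rfl fun j _ => by rw [hu]
          rw [hwfun]
          refine Measurable.add ?_ ?_
          · set g : ℕ → ℝ := fun L => ∑ j ∈ Finset.Icc 1 n,
              (if L ≤ j ∧ j ≤ L + 2 ^ (s₀ - s) - 1 then
                (2 : ℝ) ^ (-(((s₀ : ℝ) - (s : ℝ) + 1) / 2))
              else if L + 2 ^ (s₀ - s) ≤ j ∧ j ≤ L + 2 ^ (s₀ - s + 1) - 1 then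
                -((2 : ℝ) ^ (-(((s₀ : ℝ) - (s : ℝ) + 1) / 2)))
              else 0) * x j with hg
            have : (fun ω => (ms s : ℝ) * (∑ j ∈ Finset.Icc 1 n,
                (if l s ω ≤ j ∧ j ≤ l s ω + 2 ^ (s₀ - s) - 1 then
                  (2 : ℝ) ^ (-(((s₀ : ℝ) - (s : ℝ) + 1) / 2))
                else if l s ω + 2 ^ (s₀ - s) ≤ j ∧ j ≤ l s ω + 2 ^ (s₀ - s + 1) - 1 then
                  -((2 : ℝ) ^ (-(((s₀ : ℝ) - (s : ℝ) + 1) / 2)))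
                else 0) * x j))
                = (fun L => (ms s : ℝ) * g L) ∘ (l s) := rfl
            rw [this]
            exact (measurable_from_top (f := fun L => (ms s : ℝ) * g L)).comp hls
          · exact Finset.measurable_sum _ fun i _ => hzF (s, i) (s + 1) (Nat.lt_succ_self s)
        have hrec : l (s + 1) = fun ω =>
            if 0 < w s ω then l s ω else l s ω + 2 ^ (s₀ - s) :=
          funext (hlrec s (Finset.mem_Icc.mpr ⟨hs, hss₀⟩))
        rw [hrec]
        exact Measurable.ite (measurableSet_lt measurable_const hwm) hls
          ((measurable_from_top (f := fun L : ℕ => L + 2 ^ (s₀ - s))).comp hls)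
  -- the noise sums
  set S : ℕ → Ω → ℝ := fun s ω => ∑ i ∈ Finset.Icc 1 (ms s), z (s, i) ω with hSdef
  have hS_meas : ∀ s, Measurable (S s) := fun s =>
    Finset.measurable_sum _ fun i _ => hz_meas (s, i)
  have hS_G : ∀ s, Measurable[G s] (S s) := fun s =>
    Finset.measurable_sum _ fun i _ => hzG (s, i) s rfl
  have hS_law : ∀ s, Measure.map (S s) P = gaussianReal 0 ((ms s : NNReal)) := by
    intro s
    have hinj : Set.InjOn (fun i : ℕ => (s, i)) (Finset.Icc 1 (ms s)) := by
      intro i _ j _ hij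
      simpa using hij
    have hrw : S s = fun ω => ∑ p ∈ (Finset.Icc 1 (ms s)).image (fun i => (s, i)), z p ω := by
      funext ω
      rw [Finset.sum_image (fun i hi j hj h => hinj hi hj h)]
    rw [hrw, cbs_map_sum_gaussian P z hz_meas hz_indep hz_law]
    congr 1
    rw [Finset.card_image_of_injOn hinj, Nat.card_Icc]
    simp
  -- the containment sets
  set C : ℕ → Set Ω := fun s => {ω | l s ω ≤ jstar ∧ jstar ≤ l s ω + 2 ^ (s₀ + 1 - s) - 1}
    with hC
  -- union bound decomposition
  have hsub : {ω | l (s₀ + 1) ω ≠ jstar} ⊆ ⋃ s ∈ Finset.Icc 1 s₀, (C s \ C (s + 1)) := by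
    intro ω hω
    simp only [Set.mem_setOf_eq] at hω
    by_contra hcon
    have hstep : ∀ s ∈ Finset.Icc 1 s₀, ω ∈ C s → ω ∈ C (s + 1) := by
      intro s hs hCs
      by_contra hnot
      exact hcon (Set.mem_biUnion hs ⟨hCs, hnot⟩)
    have hC1 : ω ∈ C 1 := by
      constructor
      · rw [hl1 ω]; exact hj1
      · rw [hl1 ω]
        have : s₀ + 1 - 1 = s₀ := by omega
        rw [this]
        have h2 : (1 : ℕ) + 2 ^ s₀ - 1 = n := by rw [hn]; omega
        omega
    have hall : ∀ s, 1 ≤ s → s ≤ s₀ + 1 → ω ∈ C s := by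
      intro s hs1
      induction s, hs1 using Nat.le_induction with
      | base => intro _; exact hC1
      | succ s hs ih =>
          intro hs2
          exact hstep s (Finset.mem_Icc.mpr ⟨hs, by omega⟩) (ih (by omega))
    have hfin := hall (s₀ + 1) (by omega) le_rfl
    obtain ⟨ha, hb⟩ := hfin
    have : s₀ + 1 - (s₀ + 1) = 0 := by omega
    rw [this] at hb
    simp at hb
    exact hω (le_antisymm ha hb)
  -- per stage bound
  have hstage : ∀ s ∈ Finset.Icc 1 s₀, P (C s \ C (s + 1)) ≤ q := by
    intro s hs
    obtain ⟨hs1, hs2⟩ := Finset.mem_Icc.mp hs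
    -- power facts for omega
    have hp1 : 1 ≤ 2 ^ (s₀ - s) := Nat.one_le_two_pow
    have hp2 : 2 ^ (s₀ - s + 1) = 2 * 2 ^ (s₀ - s) := by rw [pow_succ]; ring
    have hp3 : 2 ^ (s₀ + 1 - s) = 2 * 2 ^ (s₀ - s) := by
      rw [show s₀ + 1 - s = (s₀ - s) + 1 from by omega, pow_succ]; ring
    have hp4 : 2 ^ (s₀ + 1 - (s + 1)) = 2 ^ (s₀ - s) := by
      rw [show s₀ + 1 - (s + 1) = s₀ - s from by omega]
    set A : ℝ := (2 : ℝ) ^ (-(((s₀ : ℝ) - (s : ℝ) + 1) / 2)) with hA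
    have hApos : 0 < A := Real.rpow_pos_of_pos two_pos _
    have hmspos : 0 < (ms s : ℝ) := by
      have : 0 < ms s := by rw [hms]; exact Nat.succ_pos _
      exact_mod_cast this
    set t : ℝ := (ms s : ℝ) * μ * A with ht
    have htpos : 0 < t := by positivity
    set Lset : Set Ω := (l s) ⁻¹' {L : ℕ | L ≤ jstar ∧ jstar ≤ L + 2 ^ (s₀ - s) - 1} with hLs
    set Rset : Set Ω :=
      (l s) ⁻¹' {L : ℕ | L + 2 ^ (s₀ - s) ≤ jstar ∧ jstar ≤ L + 2 * 2 ^ (s₀ - s) - 1} with hRs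
    -- the inner product picks out coordinate jstar
    have hinner : ∀ ω, (∑ j ∈ Finset.Icc 1 n, u s ω j * x j) = u s ω jstar * μ := by
      intro ω
      have hterm : ∀ j, u s ω j * x j = if j = jstar then u s ω j * μ else 0 := by
        intro j
        rw [hx]
        by_cases h : j = jstar <;> simp [h]
      simp_rw [hterm]
      rw [Finset.sum_ite_eq' (Finset.Icc 1 n) jstar (fun j => u s ω j * μ), if_pos hjstar]
    -- the error event at stage s is contained in two slabs
    have hcase : C s \ C (s + 1) ⊆
        (Lset ∩ S s ⁻¹' Set.Iic (-t)) ∪ (Rset ∩ S s ⁻¹' Set.Ici t) := by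
      rintro ω ⟨⟨h1, h2⟩, h3⟩
      have hrec := hlrec s hs ω
      by_cases hleft : jstar ≤ l s ω + 2 ^ (s₀ - s) - 1
      · left
        refine ⟨⟨h1, hleft⟩, ?_⟩
        have hwle : ¬ (0 < w s ω) := by
          intro hpos
          have hl' : l (s + 1) ω = l s ω := by rw [hrec, if_pos hpos]
          exact h3 ⟨by omega, by omega⟩
        push_neg at hwle
        have huj : u s ω jstar = A := by rw [hu s ω jstar, if_pos ⟨h1, hleft⟩]
        have hwval : w s ω = (ms s : ℝ) * (A * μ) + S s ω := by
          rw [hw, hinner, huj]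
        rw [hwval] at hwle
        simp only [Set.mem_preimage, Set.mem_Iic]
        rw [ht]
        linarith
      · right
        have hright : l s ω + 2 ^ (s₀ - s) ≤ jstar := by omega
        refine ⟨⟨hright, by omega⟩, ?_⟩
        have hwpos : 0 < w s ω := by
          by_contra hle
          have hl' : l (s + 1) ω = l s ω + 2 ^ (s₀ - s) := by rw [hrec, if_neg hle]
          exact h3 ⟨by omega, by omega⟩
        have huj : u s ω jstar = -A := by
          rw [hu s ω jstar, if_neg (by omega), if_pos ⟨hright, by omega⟩]
        have hwval : w s ω = (ms s : ℝ) * (-A * μ) + S s ω := by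
          rw [hw, hinner, huj]
        rw [hwval] at hwpos
        simp only [Set.mem_preimage, Set.mem_Ici]
        rw [ht]
        linarith
    -- measurability of the slabs
    have hLF : MeasurableSet[F s] Lset :=
      hl_meas s hs1 (by omega) MeasurableSpace.measurableSet_top
    have hRF : MeasurableSet[F s] Rset :=
      hl_meas s hs1 (by omega) MeasurableSpace.measurableSet_top
    have hTneg : MeasurableSet[G s] (S s ⁻¹' Set.Iic (-t)) := hS_G s measurableSet_Iic
    have hTpos : MeasurableSet[G s] (S s ⁻¹' Set.Ici t) := hS_G s measurableSet_Ici
    have hmul1 : P (Lset ∩ S s ⁻¹' Set.Iic (-t)) = P Lset * P (S s ⁻¹' Set.Iic (-t)) :=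
      ((hIndep s).indepSet_of_measurableSet hLF hTneg).measure_inter_eq_mul
    have hmul2 : P (Rset ∩ S s ⁻¹' Set.Ici t) = P Rset * P (S s ⁻¹' Set.Ici t) :=
      ((hIndep s).indepSet_of_measurableSet hRF hTpos).measure_inter_eq_mul
    -- the numerical exponent comparison
    have hmsne : ((ms s : ℕ) : NNReal) ≠ 0 := Nat.cast_ne_zero.mpr (by rw [hms]; exact Nat.succ_ne_zero _)
    have hA2 : A ^ 2 * (2 : ℝ) ^ (s₀ - s + 1) = 1 := by
      have hcast : ((s₀ : ℝ) - (s : ℝ) + 1) = ((s₀ - s + 1 : ℕ) : ℝ) := by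
        push_cast [Nat.cast_sub hs2]
        ring
      have hA2' : A ^ 2 = ((2 : ℝ) ^ (s₀ - s + 1 : ℕ))⁻¹ := by
        rw [hA, ← Real.rpow_natCast ((2:ℝ) ^ (-(((s₀ : ℝ) - (s : ℝ) + 1) / 2))) 2,
          ← Real.rpow_mul (by norm_num : (0:ℝ) ≤ 2),
          show (-(((s₀ : ℝ) - (s : ℝ) + 1) / 2)) * ((2:ℕ):ℝ) = -(((s₀ - s + 1 : ℕ) : ℝ)) from by
            rw [← hcast]; push_cast; ring,
          Real.rpow_neg (by norm_num : (0:ℝ) ≤ 2), Real.rpow_natCast]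
      rw [hA2']
      field_simp
    have ht2' : t ^ 2 * (2 : ℝ) ^ (s₀ - s + 1) = (ms s : ℝ) ^ 2 * μ ^ 2 := by
      rw [ht]
      linear_combination ((ms s : ℝ) ^ 2 * μ ^ 2) * hA2
    have key : (m : ℝ) * (2 : ℝ) ^ (s₀ - s + 1) ≤ (ms s : ℝ) * (4 * n) := by
      have hdivN : m - s₀ ≤ 2 ^ s * ms s := by
        rw [hms]
        exact (Nat.lt_mul_div_succ (m - s₀) (Nat.two_pow_pos s)).le
      have hdivR : (m : ℝ) - s₀ ≤ (2 : ℝ) ^ s * (ms s : ℝ) := by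
        have := (Nat.cast_le (α := ℝ)).mpr hdivN
        push_cast [Nat.cast_sub hs₀m] at this
        linarith
      have hmR : (m : ℝ) ≤ 2 * ((m : ℝ) - s₀) := by
        have := (Nat.cast_le (α := ℝ)).mpr hm
        push_cast at this
        linarith
      have hnR : (n : ℝ) = 2 ^ s₀ := by rw [hn]; push_cast; ring
      have hps : (2 : ℝ) ^ s * (2 : ℝ) ^ (s₀ - s + 1) = 2 * 2 ^ s₀ := by
        rw [← pow_add, show s + (s₀ - s + 1) = s₀ + 1 from by omega, pow_succ]
        ring
      have h2c : (0 : ℝ) < (2 : ℝ) ^ (s₀ - s + 1) := by positivity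
      calc (m : ℝ) * (2 : ℝ) ^ (s₀ - s + 1)
          ≤ (2 * ((m : ℝ) - s₀)) * (2 : ℝ) ^ (s₀ - s + 1) := by nlinarith
        _ ≤ (2 * ((2 : ℝ) ^ s * (ms s : ℝ))) * (2 : ℝ) ^ (s₀ - s + 1) := by
            have h1 : (0:ℝ) ≤ 2 * (2 : ℝ) ^ (s₀ - s + 1) := by positivity
            nlinarith
        _ = (ms s : ℝ) * (4 * n) := by
            rw [hnR]
            linear_combination (2 * (ms s : ℝ)) * hps
    have harith : μ ^ 2 * (m : ℝ) / (8 * n) ≤ t ^ 2 / (2 * (ms s : ℝ)) := by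
      have hnpos : (0 : ℝ) < n := by
        have : 0 < n := by rw [hn]; positivity
        exact_mod_cast this
      have h2c : (0 : ℝ) < (2 : ℝ) ^ (s₀ - s + 1) := by positivity
      rw [div_le_div_iff₀ (by positivity) (by positivity), ← mul_le_mul_iff_of_pos_right h2c]
      have hR : t ^ 2 * (8 * (n : ℝ)) * (2 : ℝ) ^ (s₀ - s + 1)
          = 8 * (n : ℝ) * ((ms s : ℝ) ^ 2 * μ ^ 2) := by
        linear_combination (8 * (n : ℝ)) * ht2'
      rw [hR]
      nlinarith [mul_le_mul_of_nonneg_left key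
        (show (0:ℝ) ≤ 2 * (ms s : ℝ) * μ ^ 2 by positivity)]
    -- tail bounds
    have hcastms : (((ms s : ℕ) : NNReal) : ℝ) = (ms s : ℝ) := by simp
    have hexp_le : (1 / 2) * Real.exp (-(t ^ 2) / (2 * (((ms s : ℕ) : NNReal) : ℝ)))
        ≤ (1 / 2) * Real.exp (-(μ ^ 2 * (m : ℝ)) / (8 * n)) := by
      refine mul_le_mul_of_nonneg_left ?_ (by norm_num)
      refine Real.exp_le_exp.mpr ?_
      rw [hcastms, neg_div, neg_div, neg_le_neg_iff]
      exact harith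
    have htail1 : P (S s ⁻¹' Set.Iic (-t)) ≤ q := by
      rw [← Measure.map_apply (hS_meas s) measurableSet_Iic, hS_law s]
      refine le_trans (cbs_tail_neg _ hmsne t htpos.le) ?_
      rw [hq]
      exact ENNReal.ofReal_le_ofReal hexp_le
    have htail2 : P (S s ⁻¹' Set.Ici t) ≤ q := by
      rw [← Measure.map_apply (hS_meas s) measurableSet_Ici, hS_law s]
      refine le_trans (cbs_tail _ hmsne t htpos.le) ?_
      rw [hq]
      exact ENNReal.ofReal_le_ofReal hexp_le
    -- disjointness of the slabs
    have hdisj : Disjoint Lset Rset := by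
      rw [Set.disjoint_left]
      intro ω hL hR
      obtain ⟨hL1, hL2⟩ := hL
      obtain ⟨hR1, hR2⟩ := hR
      omega
    have hRamb : MeasurableSet Rset := hFle s _ hRF
    calc P (C s \ C (s + 1))
        ≤ P ((Lset ∩ S s ⁻¹' Set.Iic (-t)) ∪ (Rset ∩ S s ⁻¹' Set.Ici t)) := measure_mono hcase
      _ ≤ P (Lset ∩ S s ⁻¹' Set.Iic (-t)) + P (Rset ∩ S s ⁻¹' Set.Ici t) := measure_union_le _ _
      _ = P Lset * P (S s ⁻¹' Set.Iic (-t)) + P Rset * P (S s ⁻¹' Set.Ici t) := by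
          rw [hmul1, hmul2]
      _ ≤ P Lset * q + P Rset * q :=
          add_le_add (mul_le_mul_right htail1 _) (mul_le_mul_right htail2 _)
      _ = (P Lset + P Rset) * q := (add_mul _ _ _).symm
      _ = P (Lset ∪ Rset) * q := by rw [measure_union hdisj hRamb]
      _ ≤ 1 * q := mul_le_mul_left prob_le_one _
      _ = q := one_mul q
  -- put everything together
  calc P {ω | l (s₀ + 1) ω ≠ jstar}
      ≤ P (⋃ s ∈ Finset.Icc 1 s₀, (C s \ C (s + 1))) := measure_mono hsub
    _ ≤ ∑ s ∈ Finset.Icc 1 s₀, P (C s \ C (s + 1)) := measure_biUnion_finset_le _ _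
    _ ≤ ∑ s ∈ Finset.Icc 1 s₀, q := Finset.sum_le_sum fun s hs => hstage s hs
    _ = (s₀ : ENNReal) * q := by
        rw [Finset.sum_const, Nat.card_Icc]
        simp [nsmul_eq_mul]
    _ = ENNReal.ofReal (((s₀ : ℝ) / 2) * Real.exp (-(μ ^ 2 * (m : ℝ)) / (8 * n))) := by
        rw [hq, ← ENNReal.ofReal_natCast s₀, ← ENNReal.ofReal_mul (by positivity)]
        congr 1
        ring
end

section
/- Corollary (reliable recovery at the √(log log) scale): in the setting of the compressive binary search theorem, if additionally n ≥ 4 and μ ≥ 4·√(log log₂ n)·√(n/m), then (s₀/2)·exp(−μ²·m/(8n)) ≤ 1/4; consequently the compressive binary search locates the nonzero entry with probability at least 3/4. -/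
/-- **Reliable recovery at the `√(log log)` scale.**
In the setting of the compressive binary search theorem (`n = 2 ^ s₀`, `s₀ ≥ 1`,
`m ≥ 2 s₀`, `μ > 0`), if additionally `n ≥ 4` and
`μ ≥ 4 · √(log (log₂ n)) · √(n / m)`, then the error bound of the theorem satisfies
`(s₀ / 2) · exp (-μ² m / (8 n)) ≤ 1 / 4`; consequently the compressive binary search
locates the nonzero entry with probability at least `3 / 4`. -/
theorem compressive_binary_search_quarter (s₀ m n : ℕ) (hs₀ : 1 ≤ s₀) (hn : n = 2 ^ s₀)
    (hm : 2 * s₀ ≤ m) (hn4 : 4 ≤ n) (μ : ℝ) (hμ : 0 < μ)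
    (hμ' : 4 * Real.sqrt (Real.log (Real.logb 2 (n : ℝ))) * Real.sqrt ((n : ℝ) / m) ≤ μ) :
    ((s₀ : ℝ) / 2) * Real.exp (-(μ ^ 2 * (m : ℝ)) / (8 * n)) ≤ 1 / 4 := by
  have hs2 : 2 ≤ s₀ := by
    by_contra h
    interval_cases s₀ <;> omega
  have hm0 : 0 < m := by omega
  have hn0 : 0 < n := by omega
  have hmR : (0:ℝ) < m := by exact_mod_cast hm0
  have hnR : (0:ℝ) < n := by exact_mod_cast hn0
  have hsR : (2:ℝ) ≤ s₀ := by exact_mod_cast hs2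
  have hlogb : Real.logb 2 (n : ℝ) = s₀ := by
    rw [hn]
    push_cast
    rw [Real.logb_pow]
    simp
  set a := Real.log (s₀ : ℝ) with ha
  have ha0 : 0 < a := Real.log_pos (by linarith)
  rw [hlogb] at hμ'
  -- square the hypothesis
  have hsq : 16 * a * ((n:ℝ) / m) ≤ μ ^ 2 := by
    have h1 : Real.sqrt a ^ 2 = a := Real.sq_sqrt ha0.le
    have h2 : Real.sqrt ((n:ℝ)/m) ^ 2 = (n:ℝ)/m := Real.sq_sqrt (by positivity)
    nlinarith [Real.sqrt_nonneg a, Real.sqrt_nonneg ((n:ℝ)/m),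
      mul_nonneg (Real.sqrt_nonneg a) (Real.sqrt_nonneg ((n:ℝ)/m))]
  have hexp : 2 * a ≤ μ ^ 2 * (m:ℝ) / (8 * n) := by
    rw [le_div_iff₀ (by positivity)]
    have : 16 * a * ((n:ℝ)/m) * m ≤ μ ^ 2 * m :=
      mul_le_mul_of_nonneg_right hsq hmR.le
    calc 2 * a * (8 * n) = 16 * a * ((n:ℝ)/m) * m := by field_simp; ring
      _ ≤ μ ^ 2 * m := this
  have hE : Real.exp (-(μ ^ 2 * (m : ℝ)) / (8 * n)) ≤ 1 / ((s₀:ℝ) * s₀) := by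
    have : Real.exp (-(μ ^ 2 * (m : ℝ)) / (8 * n)) ≤ Real.exp (-(2 * a)) := by
      apply Real.exp_le_exp.mpr
      rw [neg_div]
      linarith
    calc Real.exp (-(μ ^ 2 * (m : ℝ)) / (8 * n)) ≤ Real.exp (-(2*a)) := this
      _ = 1 / ((s₀:ℝ) * s₀) := by
          rw [Real.exp_neg, two_mul, Real.exp_add, ha, Real.exp_log (by linarith)]
          rw [one_div]
  calc ((s₀ : ℝ) / 2) * Real.exp (-(μ ^ 2 * (m : ℝ)) / (8 * n))
      ≤ ((s₀ : ℝ) / 2) * (1 / ((s₀:ℝ) * s₀)) :=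
        mul_le_mul_of_nonneg_left hE (by positivity)
    _ = 1 / (2 * s₀) := by field_simp
    _ ≤ 1 / 4 := by
        apply div_le_div_of_nonneg_left (by norm_num) (by norm_num)
        linarith
end

section
/- KL bound for half-supported mixtures in the adaptive Gaussian measurement model: let n be even, let J_1 = {1,…,n/2} and J_2 = {n/2+1,…,n}, let μ > 0, and for r = 1, 2 let P_r = (2/n)·∑_{j ∈ J_r} P_{(j)} be the uniform mixture of the measures P_{(j)} over j ∈ J_r. Then KL(P_0, P_1) + KL(P_0, P_2) ≤ μ²·m/n. -/
open MeasureTheory ProbabilityTheory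
open scoped RealInnerProductSpace ENNReal Classical

/-- Law of the adaptive Gaussian measurement model after `k` measurements:
conditionally on the past `(y 1, …, y (i-1))`, the measurement `y i` is Gaussian with
mean `⟪a i (y 1, …, y (i-1)), x⟫` and variance `1`. -/
noncomputable def advMeasure {n : ℕ} (a : (i : ℕ) → (Fin i → ℝ) → EuclideanSpace ℝ (Fin n))
    (x : EuclideanSpace ℝ (Fin n)) : (k : ℕ) → Measure (Fin k → ℝ)
  | 0 => Measure.dirac (fun i => i.elim0)
  | k + 1 =>
      (advMeasure a x k).bind fun y =>
        (gaussianReal ⟪a k y, x⟫ 1).map (fun t => Fin.snoc y t)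

/-- Kullback–Leibler divergence: `∫ log (dP/dQ) dP` when `P ≪ Q` (and the integral makes
sense), and `+∞` otherwise. -/
noncomputable def klDiv {Ω : Type*} [MeasurableSpace Ω] (P Q : Measure Ω) : ℝ≥0∞ :=
  if P ≪ Q ∧ Integrable (fun ω => Real.log (P.rnDeriv Q ω).toReal) P then
    ENNReal.ofReal (∫ ω, Real.log (P.rnDeriv Q ω).toReal ∂P)
  else ⊤


section AdvProof

open Real
open scoped NNReal

noncomputable section

namespace AdvAux

/-- restriction to the first `i` coordinates -/
def restr (i k : ℕ) (y : Fin k → ℝ) : Fin i → ℝ :=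
  fun j => if h : (j : ℕ) < k then y ⟨j, h⟩ else 0

lemma measurable_restr (i k : ℕ) : Measurable (restr i k) := by
  apply measurable_pi_lambda
  intro j
  by_cases h : (j : ℕ) < k
  · simpa [restr, h] using measurable_pi_apply (⟨j, h⟩ : Fin k)
  · simpa [restr, h] using measurable_const

@[simp] lemma restr_self (k : ℕ) (y : Fin k → ℝ) : restr k k y = y := by
  funext j
  simp [restr, j.isLt]

lemma restr_snoc {i k : ℕ} (hik : i ≤ k) (y : Fin k → ℝ) (t : ℝ) :
    restr i (k + 1) (Fin.snoc y t) = restr i k y := by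
  funext j
  have hj : (j : ℕ) < k := lt_of_lt_of_le j.isLt hik
  have hj' : (j : ℕ) < k + 1 := hj.trans (Nat.lt_succ_self k)
  have he : (⟨(j : ℕ), hj'⟩ : Fin (k + 1)) = Fin.castSucc ⟨(j : ℕ), hj⟩ := rfl
  simp only [restr, hj, hj', dif_pos, he, Fin.snoc_castSucc]

/-- mean coefficient at step `i` -/
def mcoef (a : (i : ℕ) → (Fin i → ℝ) → EuclideanSpace ℝ (Fin n))
    (x : EuclideanSpace ℝ (Fin n)) (k i : ℕ) (y : Fin k → ℝ) : ℝ :=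
  ⟪a i (restr i k y), x⟫

lemma measurable_mcoef (a : (i : ℕ) → (Fin i → ℝ) → EuclideanSpace ℝ (Fin n))
    (x : EuclideanSpace ℝ (Fin n)) (k i : ℕ) (ha : Measurable (a i)) :
    Measurable (mcoef a x k i) := by
  have h1 : Continuous fun v : EuclideanSpace ℝ (Fin n) => ⟪v, x⟫ :=
    Continuous.inner continuous_id continuous_const
  exact h1.measurable.comp (ha.comp (measurable_restr i k))

lemma mcoef_snoc (a : (i : ℕ) → (Fin i → ℝ) → EuclideanSpace ℝ (Fin n))
    (x : EuclideanSpace ℝ (Fin n)) {i k : ℕ} (hik : i ≤ k) (y : Fin k → ℝ) (t : ℝ) :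
    mcoef a x (k + 1) i (Fin.snoc y t) = mcoef a x k i y := by
  simp [mcoef, restr_snoc hik]

lemma mcoef_snoc_last (a : (i : ℕ) → (Fin i → ℝ) → EuclideanSpace ℝ (Fin n))
    (x : EuclideanSpace ℝ (Fin n)) {k : ℕ} (y : Fin k → ℝ) (t : ℝ) :
    mcoef a x (k + 1) k (Fin.snoc y t) = ⟪a k y, x⟫ := by
  rw [mcoef, restr_snoc le_rfl, restr_self]

/-- log-likelihood ratio after `k` steps -/
def ell (a : (i : ℕ) → (Fin i → ℝ) → EuclideanSpace ℝ (Fin n))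
    (x : EuclideanSpace ℝ (Fin n)) (k : ℕ) (y : Fin k → ℝ) : ℝ :=
  ∑ i : Fin k, (mcoef a x k i y * y i - mcoef a x k i y ^ 2 / 2)

lemma measurable_ell (a : (i : ℕ) → (Fin i → ℝ) → EuclideanSpace ℝ (Fin n))
    (x : EuclideanSpace ℝ (Fin n)) (k : ℕ) (ha : ∀ i, i < k → Measurable (a i)) :
    Measurable (ell a x k) := by
  apply Finset.measurable_sum
  intro i _
  exact ((measurable_mcoef a x k i (ha i i.isLt)).mul (measurable_pi_apply i)).sub
    (((measurable_mcoef a x k i (ha i i.isLt)).pow_const 2).div_const 2)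

@[simp] lemma ell_zero (a : (i : ℕ) → (Fin i → ℝ) → EuclideanSpace ℝ (Fin n))
    (x : EuclideanSpace ℝ (Fin n)) (y : Fin 0 → ℝ) : ell a x 0 y = 0 := by
  simp [ell]

lemma ell_snoc (a : (i : ℕ) → (Fin i → ℝ) → EuclideanSpace ℝ (Fin n))
    (x : EuclideanSpace ℝ (Fin n)) (k : ℕ) (y : Fin k → ℝ) (t : ℝ) :
    ell a x (k + 1) (Fin.snoc y t) =
      ell a x k y + (⟪a k y, x⟫ * t - ⟪a k y, x⟫ ^ 2 / 2) := by
  rw [ell, Fin.sum_univ_castSucc]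
  congr 1
  · rw [ell]
    refine Finset.sum_congr rfl fun i _ => ?_
    rw [Fin.coe_castSucc, mcoef_snoc a x i.isLt.le, Fin.snoc_castSucc]
  · rw [Fin.val_last, mcoef_snoc_last, Fin.snoc_last]

/-- the Gaussian likelihood-ratio step density -/
def gstep (c t : ℝ) : ℝ≥0∞ := ENNReal.ofReal (Real.exp (c * t - c ^ 2 / 2))

lemma measurable_gstep_uncurry : Measurable fun p : ℝ × ℝ => gstep p.1 p.2 := by
  unfold gstep; fun_prop

lemma measurable_gstep (c : ℝ) : Measurable (gstep c) := by
  unfold gstep; fun_prop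

lemma gstep_pos (c t : ℝ) : 0 < gstep c t := by
  rw [gstep, ENNReal.ofReal_pos]; exact Real.exp_pos _

lemma gstep_ne_top (c t : ℝ) : gstep c t ≠ ∞ := ENNReal.ofReal_ne_top

lemma gaussianReal_eq_withDensity (c : ℝ) :
    gaussianReal c 1 = (gaussianReal 0 1).withDensity (gstep c) := by
  rw [gaussianReal_of_var_ne_zero c one_ne_zero, gaussianReal_of_var_ne_zero 0 one_ne_zero,
    ← withDensity_mul _ (measurable_gaussianPDF 0 1) (measurable_gstep c)]
  congr 1
  funext t
  have hexp : Real.exp (-(t - 0) ^ 2 / (2 * ((1 : ℝ≥0) : ℝ))) * Real.exp (c * t - c ^ 2 / 2)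
      = Real.exp (-(t - c) ^ 2 / (2 * ((1 : ℝ≥0) : ℝ))) := by
    rw [← Real.exp_add]
    congr 1
    push_cast
    ring
  simp only [Pi.mul_apply, gaussianPDF, gstep,
    ← ENNReal.ofReal_mul (gaussianPDFReal_nonneg 0 1 t)]
  congr 1
  simp only [gaussianPDFReal]
  rw [mul_assoc ((Real.sqrt (2 * π * ((1 : ℝ≥0) : ℝ)))⁻¹), hexp]

lemma measurable_snocp {k : ℕ} :
    Measurable fun p : (Fin k → ℝ) × ℝ => (Fin.snoc p.1 p.2 : Fin (k + 1) → ℝ) := by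
  apply measurable_pi_lambda
  intro i
  refine Fin.lastCases ?_ ?_ i
  · simpa only [Fin.snoc_last] using measurable_snd
  · intro j
    simpa only [Fin.snoc_castSucc, Function.comp_def] using (measurable_pi_apply j).comp measurable_fst

lemma measurable_snoc1 {k : ℕ} (y : Fin k → ℝ) :
    Measurable fun t : ℝ => (Fin.snoc y t : Fin (k + 1) → ℝ) :=
  measurable_snocp.comp (measurable_prodMk_left (x := y))

lemma kernel_apply {k : ℕ} (c : ℝ) (y : Fin k → ℝ) {s : Set (Fin (k + 1) → ℝ)}
    (hs : MeasurableSet s) :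
    ((gaussianReal c 1).map (fun t => (Fin.snoc y t : Fin (k + 1) → ℝ))) s =
      ∫⁻ t, s.indicator (1 : (Fin (k + 1) → ℝ) → ℝ≥0∞) (Fin.snoc y t) * gstep c t
        ∂(gaussianReal 0 1) := by
  rw [gaussianReal_eq_withDensity c, Measure.map_apply (measurable_snoc1 y) hs,
    withDensity_apply _ ((measurable_snoc1 y) hs)]
  rw [← lintegral_indicator ((measurable_snoc1 y) hs)]
  congr 1
  funext t
  by_cases ht : (Fin.snoc y t : Fin (k + 1) → ℝ) ∈ s
  · simp only [Set.indicator_of_mem (Set.mem_preimage.mpr ht), Set.indicator_of_mem ht,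
      Pi.one_apply, one_mul]
  · have ht' : t ∉ (fun t => (Fin.snoc y t : Fin (k + 1) → ℝ)) ⁻¹' s := ht
    rw [Set.indicator_of_notMem ht', Set.indicator_of_notMem ht, zero_mul]

lemma measurable_indicator_snoc {k : ℕ} {s : Set (Fin (k + 1) → ℝ)} (hs : MeasurableSet s) :
    Measurable fun p : (Fin k → ℝ) × ℝ =>
      s.indicator (1 : (Fin (k + 1) → ℝ) → ℝ≥0∞) (Fin.snoc p.1 p.2) :=
  (measurable_one.indicator hs).comp measurable_snocp

set_option maxHeartbeats 1000000 in
lemma measurable_kernel {k : ℕ} (c : (Fin k → ℝ) → ℝ) (hc : Measurable c) :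
    Measurable fun y : Fin k → ℝ =>
      ((gaussianReal (c y) 1).map (fun t => (Fin.snoc y t : Fin (k + 1) → ℝ))) := by
  apply Measure.measurable_of_measurable_coe
  intro s hs
  simp only [kernel_apply _ _ hs]
  have h2 : Measurable fun p : (Fin k → ℝ) × ℝ => gstep (c p.1) p.2 := by
    unfold gstep; fun_prop
  have h1 : Measurable fun p : (Fin k → ℝ) × ℝ =>
      s.indicator (1 : (Fin (k + 1) → ℝ) → ℝ≥0∞) (Fin.snoc p.1 p.2) * gstep (c p.1) p.2 :=
    (measurable_indicator_snoc hs).mul h2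
  exact h1.lintegral_prod_right'

variable {n : ℕ} (a : (i : ℕ) → (Fin i → ℝ) → EuclideanSpace ℝ (Fin n))
  (x : EuclideanSpace ℝ (Fin n))

lemma gstep_def (c t : ℝ) : gstep c t = ENNReal.ofReal (Real.exp (c * t - c ^ 2 / 2)) := rfl

lemma restr_norm_le (i k : ℕ) (y : Fin k → ℝ) (h : ∀ z, ‖a i z‖ ≤ 1) :
    ‖a i (restr i k y)‖ ≤ 1 := h _

lemma measurable_inner_a (k : ℕ) (ha : Measurable (a k)) :
    Measurable fun y : Fin k → ℝ => ⟪a k y, x⟫ := by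
  have h1 : Continuous fun v : EuclideanSpace ℝ (Fin n) => ⟪v, x⟫ :=
    Continuous.inner continuous_id continuous_const
  exact h1.measurable.comp ha

lemma advMeasure_zero_succ (k : ℕ) :
    advMeasure a 0 (k + 1) = (advMeasure a 0 k).bind
      (fun y => (gaussianReal 0 1).map (fun t => (Fin.snoc y t : Fin (k + 1) → ℝ))) := by
  show (advMeasure a 0 k).bind _ = _
  simp [inner_zero_right]

lemma isProb_P0 (k : ℕ) : IsProbabilityMeasure (advMeasure a 0 k) := by
  induction k with
  | zero =>
    show IsProbabilityMeasure (Measure.dirac _)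
    infer_instance
  | succ k ih =>
    rw [advMeasure_zero_succ]
    constructor
    have hmk : Measurable fun y : Fin k → ℝ =>
        ((gaussianReal 0 1).map (fun t => (Fin.snoc y t : Fin (k + 1) → ℝ))) := by
      simpa using measurable_kernel (fun _ : Fin k → ℝ => (0 : ℝ)) measurable_const
    rw [Measure.bind_apply MeasurableSet.univ hmk.aemeasurable]
    have h1 : ∀ y : Fin k → ℝ,
        ((gaussianReal 0 1).map (fun t => (Fin.snoc y t : Fin (k + 1) → ℝ))) Set.univ = 1 := by
      intro y
      rw [Measure.map_apply (measurable_snoc1 y) MeasurableSet.univ]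
      simp
    simp only [h1, lintegral_one]
    exact ih.measure_univ

lemma isProb_adv (k : ℕ) (hk : ∀ i, i < k → Measurable (a i)) :
    IsProbabilityMeasure (advMeasure a x k) := by
  induction k with
  | zero =>
    show IsProbabilityMeasure (Measure.dirac _)
    infer_instance
  | succ k ih =>
    have hk' : ∀ i, i < k → Measurable (a i) := fun i hi => hk i (hi.trans (Nat.lt_succ_self k))
    have ih' := ih hk'
    show IsProbabilityMeasure ((advMeasure a x k).bind _)
    constructor
    rw [Measure.bind_apply MeasurableSet.univ
      (measurable_kernel _ (measurable_inner_a a x k (hk k (Nat.lt_succ_self k)))).aemeasurable]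
    have h1 : ∀ y : Fin k → ℝ,
        ((gaussianReal ⟪a k y, x⟫ 1).map (fun t => (Fin.snoc y t : Fin (k + 1) → ℝ)))
          Set.univ = 1 := by
      intro y
      rw [Measure.map_apply (measurable_snoc1 y) MeasurableSet.univ]
      simp
    simp only [h1, lintegral_one]
    exact ih'.measure_univ

lemma advMeasure_eq (k : ℕ) (hk : ∀ i, i < k → Measurable (a i)) :
    advMeasure a x k = (advMeasure a 0 k).withDensity
      (fun y => ENNReal.ofReal (Real.exp (ell a x k y))) := by
  induction k with
  | zero =>
    have hD : (fun y : Fin 0 → ℝ => ENNReal.ofReal (Real.exp (ell a x 0 y)))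
        = (1 : (Fin 0 → ℝ) → ℝ≥0∞) := by
      funext y; simp
    rw [hD, withDensity_one]
    rfl
  | succ k ih =>
    have hk' : ∀ i, i < k → Measurable (a i) := fun i hi => hk i (hi.trans (Nat.lt_succ_self k))
    have hak : Measurable (a k) := hk k (Nat.lt_succ_self k)
    have hax : Measurable fun y : Fin k → ℝ => ⟪a k y, x⟫ := measurable_inner_a a x k hak
    have hDk : Measurable (fun y : Fin k → ℝ => ENNReal.ofReal (Real.exp (ell a x k y))) :=
      (Real.measurable_exp.comp (measurable_ell a x k hk')).ennreal_ofReal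
    have hDk1 : Measurable
        (fun z : Fin (k + 1) → ℝ => ENNReal.ofReal (Real.exp (ell a x (k + 1) z))) :=
      (Real.measurable_exp.comp (measurable_ell a x (k + 1) hk)).ennreal_ofReal
    ext s hs
    show ((advMeasure a x k).bind _) s = _
    have hκs : Measurable fun y : Fin k → ℝ =>
        ((gaussianReal ⟪a k y, x⟫ 1).map (fun t => (Fin.snoc y t : Fin (k + 1) → ℝ))) s :=
      (Measure.measurable_coe hs).comp (measurable_kernel _ hax)
    rw [ih hk', Measure.bind_apply hs (measurable_kernel _ hax).aemeasurable,
      lintegral_withDensity_eq_lintegral_mul _ hDk hκs,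
      withDensity_apply _ hs, ← lintegral_indicator hs, advMeasure_zero_succ,
      Measure.lintegral_bind
        (Measurable.aemeasurable
          (by simpa using measurable_kernel (fun _ : Fin k → ℝ => (0 : ℝ)) measurable_const))
        (hDk1.indicator hs).aemeasurable]
    refine lintegral_congr fun y => ?_
    rw [lintegral_map (hDk1.indicator hs) (measurable_snoc1 y)]
    have hpt : ∀ t : ℝ, s.indicator
          (fun z => ENNReal.ofReal (Real.exp (ell a x (k + 1) z))) (Fin.snoc y t)
        = ENNReal.ofReal (Real.exp (ell a x k y)) *
            (s.indicator (1 : (Fin (k + 1) → ℝ) → ℝ≥0∞) (Fin.snoc y t)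
              * gstep ⟪a k y, x⟫ t) := by
      intro t
      by_cases ht : (Fin.snoc y t : Fin (k + 1) → ℝ) ∈ s
      · rw [Set.indicator_of_mem ht, Set.indicator_of_mem ht, Pi.one_apply, one_mul,
          ell_snoc, Real.exp_add, ENNReal.ofReal_mul (Real.exp_nonneg _), gstep_def]
      · rw [Set.indicator_of_notMem ht, Set.indicator_of_notMem ht, zero_mul, mul_zero]
    simp only [hpt]
    have hmt : Measurable fun t : ℝ =>
        s.indicator (1 : (Fin (k + 1) → ℝ) → ℝ≥0∞) (Fin.snoc y t) * gstep ⟪a k y, x⟫ t :=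
      ((measurable_one.indicator hs).comp (measurable_snoc1 y)).mul (measurable_gstep _)
    rw [lintegral_const_mul _ hmt, Pi.mul_apply, kernel_apply _ _ hs]

lemma P0_succ_prod (k : ℕ) :
    advMeasure a 0 (k + 1) = ((advMeasure a 0 k).prod (gaussianReal 0 1)).map
      (fun p => (Fin.snoc p.1 p.2 : Fin (k + 1) → ℝ)) := by
  haveI := isProb_P0 a k
  ext s hs
  have hmk : Measurable fun y : Fin k → ℝ =>
      ((gaussianReal 0 1).map (fun t => (Fin.snoc y t : Fin (k + 1) → ℝ))) := by
    simpa using measurable_kernel (fun _ : Fin k → ℝ => (0 : ℝ)) measurable_const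
  rw [advMeasure_zero_succ, Measure.bind_apply hs hmk.aemeasurable,
    Measure.map_apply measurable_snocp hs, Measure.prod_apply (measurable_snocp hs)]
  refine lintegral_congr fun y => ?_
  rw [Measure.map_apply (measurable_snoc1 y) hs]
  rfl

lemma integrable_snoc_iff (k : ℕ) (f : (Fin (k + 1) → ℝ) → ℝ) (hf : Measurable f) :
    Integrable f (advMeasure a 0 (k + 1)) ↔
      Integrable (fun p : (Fin k → ℝ) × ℝ => f (Fin.snoc p.1 p.2))
        ((advMeasure a 0 k).prod (gaussianReal 0 1)) := by
  rw [P0_succ_prod, integrable_map_measure hf.aestronglyMeasurable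
    measurable_snocp.aemeasurable, Function.comp_def]

lemma integral_snoc (k : ℕ) (f : (Fin (k + 1) → ℝ) → ℝ) (hf : Measurable f)
    (hint : Integrable (fun p : (Fin k → ℝ) × ℝ => f (Fin.snoc p.1 p.2))
      ((advMeasure a 0 k).prod (gaussianReal 0 1))) :
    ∫ z, f z ∂(advMeasure a 0 (k + 1)) =
      ∫ y, ∫ t, f (Fin.snoc y t) ∂(gaussianReal 0 1) ∂(advMeasure a 0 k) := by
  haveI := isProb_P0 a k
  rw [P0_succ_prod, integral_map measurable_snocp.aemeasurable hf.aestronglyMeasurable]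
  exact MeasureTheory.integral_prod _ hint

lemma integrable_comp_fst (k : ℕ) (g : (Fin k → ℝ) → ℝ) (hg : Measurable g)
    (hgi : Integrable g (advMeasure a 0 k)) :
    Integrable (fun p : (Fin k → ℝ) × ℝ => g p.1)
      ((advMeasure a 0 k).prod (gaussianReal 0 1)) := by
  haveI := isProb_P0 a k
  have hmap : ((advMeasure a 0 k).prod (gaussianReal 0 1)).map Prod.fst = advMeasure a 0 k := by
    rw [Measure.map_fst_prod]; simp
  rw [← hmap] at hgi
  exact (integrable_map_measure hg.aestronglyMeasurable measurable_fst.aemeasurable).mp hgi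

lemma integrable_id_G0 : Integrable (fun t : ℝ => t) (gaussianReal 0 1) := by
  rw [gaussianReal_of_var_ne_zero 0 one_ne_zero,
    integrable_withDensity_iff (measurable_gaussianPDF 0 1)
      (ae_of_all _ fun t => ENNReal.ofReal_lt_top)]
  have heq : (fun t : ℝ => t * ((gaussianPDF 0 1 t).toReal))
      = fun t => (Real.sqrt (2 * π))⁻¹ * (t * Real.exp (-(1/2) * t ^ 2)) := by
    funext t
    rw [gaussianPDF, ENNReal.toReal_ofReal (gaussianPDFReal_nonneg _ _ _), gaussianPDFReal]
    have h1 : -(t - 0) ^ 2 / (2 * ((1 : ℝ≥0) : ℝ)) = -(1/2) * t ^ 2 := by push_cast; ring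
    rw [h1]
    push_cast
    ring
  rw [heq]
  exact (integrable_mul_exp_neg_mul_sq (by norm_num : (0:ℝ) < 1/2)).const_mul _

lemma integral_id_G0 : ∫ t, t ∂(gaussianReal 0 1) = 0 := by
  have hone : (⟨(-1 : ℝ) ^ 2, sq_nonneg _⟩ : ℝ≥0) * 1 = 1 := by
    ext; norm_num
  have hmap : (gaussianReal 0 1).map (fun t => -1 * t) = gaussianReal 0 1 := by
    have := gaussianReal_map_const_mul (μ := 0) (v := 1) (-1)
    convert this using 2
    · simp
    · ext; norm_num
  have h : ∫ t, t ∂(gaussianReal 0 1) = ∫ t, (-1 : ℝ) * t ∂(gaussianReal 0 1) := by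
    conv_lhs => rw [← hmap]
    rw [integral_map (f := fun t : ℝ => t) (by fun_prop) measurable_id.aestronglyMeasurable]
  simp only [neg_one_mul] at h
  rw [integral_neg] at h
  linarith

/-- sum of squared mean coefficients -/
noncomputable def qx (a : (i : ℕ) → (Fin i → ℝ) → EuclideanSpace ℝ (Fin n))
    (x : EuclideanSpace ℝ (Fin n)) (k : ℕ) (y : Fin k → ℝ) : ℝ :=
  ∑ i : Fin k, mcoef a x k i y ^ 2

lemma measurable_qx (k : ℕ) (hk : ∀ i, i < k → Measurable (a i)) :
    Measurable (qx a x k) :=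
  Finset.measurable_sum _ fun i _ =>
    (measurable_mcoef a x k i (hk i i.isLt)).pow_const 2

lemma qx_nonneg (k : ℕ) (y : Fin k → ℝ) : 0 ≤ qx a x k y :=
  Finset.sum_nonneg fun i _ => sq_nonneg _

lemma qx_snoc (k : ℕ) (y : Fin k → ℝ) (t : ℝ) :
    qx a x (k + 1) (Fin.snoc y t) = qx a x k y + ⟪a k y, x⟫ ^ 2 := by
  rw [qx, Fin.sum_univ_castSucc]
  congr 1
  · rw [qx]
    refine Finset.sum_congr rfl fun i _ => ?_
    rw [Fin.coe_castSucc, mcoef_snoc a x i.isLt.le]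
  · rw [Fin.val_last, mcoef_snoc_last]

lemma mcoef_abs_le (k i : ℕ) (y : Fin k → ℝ) (hb : ∀ z, ‖a i z‖ ≤ 1) :
    |mcoef a x k i y| ≤ ‖x‖ := by
  refine (abs_real_inner_le_norm _ _).trans ?_
  have := restr_norm_le a i k y hb
  calc ‖a i (restr i k y)‖ * ‖x‖ ≤ 1 * ‖x‖ :=
        mul_le_mul_of_nonneg_right this (norm_nonneg x)
    _ = ‖x‖ := one_mul _

lemma qx_le (k : ℕ) (y : Fin k → ℝ) (hb : ∀ i, i < k → ∀ z, ‖a i z‖ ≤ 1) :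
    qx a x k y ≤ (k : ℝ) * ‖x‖ ^ 2 := by
  have h1 : ∀ i : Fin k, mcoef a x k i y ^ 2 ≤ ‖x‖ ^ 2 := by
    intro i
    rw [← sq_abs]
    exact pow_le_pow_left₀ (abs_nonneg _) (mcoef_abs_le a x k i y (hb i i.isLt)) 2
  calc qx a x k y ≤ ∑ _i : Fin k, ‖x‖ ^ 2 := Finset.sum_le_sum fun i _ => h1 i
    _ = (k : ℝ) * ‖x‖ ^ 2 := by rw [Finset.sum_const, Finset.card_univ, Fintype.card_fin, nsmul_eq_mul]

lemma integrable_qx (k : ℕ) (hk : ∀ i, i < k → Measurable (a i))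
    (hb : ∀ i, i < k → ∀ z, ‖a i z‖ ≤ 1) :
    Integrable (qx a x k) (advMeasure a 0 k) := by
  haveI := isProb_P0 a k
  refine Integrable.mono' (integrable_const ((k : ℝ) * ‖x‖ ^ 2))
    (measurable_qx a x k hk).aestronglyMeasurable (ae_of_all _ fun y => ?_)
  rw [Real.norm_eq_abs, abs_of_nonneg (qx_nonneg a x k y)]
  exact qx_le a x k y hb

theorem key (k : ℕ) (hk : ∀ i, i < k → Measurable (a i))
    (hb : ∀ i, i < k → ∀ z, ‖a i z‖ ≤ 1) :
    Integrable (ell a x k) (advMeasure a 0 k) ∧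
    ∫ y, ell a x k y ∂(advMeasure a 0 k)
      = -(1/2) * ∫ y, qx a x k y ∂(advMeasure a 0 k) := by
  induction k with
  | zero =>
    have he : ell a x 0 = fun _ => (0 : ℝ) := funext fun y => by simp [ell]
    have hq : qx a x 0 = fun _ => (0 : ℝ) := funext fun y => by simp [qx]
    rw [he, hq]
    exact ⟨integrable_zero _ _ _, by simp⟩
  | succ k ih =>
    haveI := isProb_P0 a k
    haveI := isProb_P0 a (k + 1)
    have hk' : ∀ i, i < k → Measurable (a i) := fun i hi => hk i (hi.trans (Nat.lt_succ_self k))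
    have hb' : ∀ i, i < k → ∀ z, ‖a i z‖ ≤ 1 := fun i hi => hb i (hi.trans (Nat.lt_succ_self k))
    obtain ⟨IH1, IH3⟩ := ih hk' hb'
    have hak : Measurable (a k) := hk k (Nat.lt_succ_self k)
    set c : (Fin k → ℝ) → ℝ := fun y => ⟪a k y, x⟫ with hc_def
    have hc : Measurable c := measurable_inner_a a x k hak
    have hcb : ∀ y, |c y| ≤ ‖x‖ := by
      intro y
      refine (abs_real_inner_le_norm _ _).trans ?_
      calc ‖a k y‖ * ‖x‖ ≤ 1 * ‖x‖ :=
            mul_le_mul_of_nonneg_right (hb k (Nat.lt_succ_self k) y) (norm_nonneg x)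
        _ = ‖x‖ := one_mul _
    -- integrability of pieces on the product measure
    have h1 : Integrable (fun p : (Fin k → ℝ) × ℝ => ell a x k p.1)
        ((advMeasure a 0 k).prod (gaussianReal 0 1)) :=
      integrable_comp_fst a k _ (measurable_ell a x k hk') IH1
    have hsnd : Integrable (fun p : (Fin k → ℝ) × ℝ => p.2)
        ((advMeasure a 0 k).prod (gaussianReal 0 1)) := by
      have hmap : ((advMeasure a 0 k).prod (gaussianReal 0 1)).map Prod.snd
          = gaussianReal 0 1 := by
        rw [Measure.map_snd_prod]; simp
      have h := integrable_id_G0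
      rw [← hmap] at h
      exact (integrable_map_measure measurable_id.aestronglyMeasurable
        measurable_snd.aemeasurable).mp h
    have h2 : Integrable (fun p : (Fin k → ℝ) × ℝ => c p.1 * p.2)
        ((advMeasure a 0 k).prod (gaussianReal 0 1)) := by
      refine Integrable.mono' ((hsnd.abs).const_mul ‖x‖)
        ((hc.comp measurable_fst).mul measurable_snd).aestronglyMeasurable
        (ae_of_all _ fun p => ?_)
      rw [Real.norm_eq_abs, abs_mul]
      exact mul_le_mul_of_nonneg_right (hcb p.1) (abs_nonneg _)
    have h3 : Integrable (fun p : (Fin k → ℝ) × ℝ => c p.1 ^ 2 / 2)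
        ((advMeasure a 0 k).prod (gaussianReal 0 1)) := by
      refine Integrable.mono' (integrable_const (‖x‖ ^ 2 / 2))
        (((hc.comp measurable_fst).pow_const 2).div_const 2).aestronglyMeasurable
        (ae_of_all _ fun p => ?_)
      rw [Real.norm_eq_abs, abs_of_nonneg (by positivity)]
      have : c p.1 ^ 2 ≤ ‖x‖ ^ 2 := by
        rw [← sq_abs]
        exact pow_le_pow_left₀ (abs_nonneg _) (hcb p.1) 2
      linarith
    have hfun : (fun p : (Fin k → ℝ) × ℝ => ell a x k p.1 + (c p.1 * p.2 - c p.1 ^ 2 / 2))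
        = fun p : (Fin k → ℝ) × ℝ => ell a x (k + 1) (Fin.snoc p.1 p.2) :=
      funext fun p => (ell_snoc a x k p.1 p.2).symm
    have hF : Integrable (fun p : (Fin k → ℝ) × ℝ => ell a x (k + 1) (Fin.snoc p.1 p.2))
        ((advMeasure a 0 k).prod (gaussianReal 0 1)) := hfun ▸ (h1.add (h2.sub h3))
    have IE1 : Integrable (ell a x (k + 1)) (advMeasure a 0 (k + 1)) :=
      (integrable_snoc_iff a k _ (measurable_ell a x (k + 1) hk)).mpr hF
    -- integrability of c^2 pieces on base
    have hq2 : Integrable (fun y => c y ^ 2 / 2) (advMeasure a 0 k) := by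
      refine Integrable.mono' (integrable_const (‖x‖ ^ 2 / 2))
        ((hc.pow_const 2).div_const 2).aestronglyMeasurable (ae_of_all _ fun y => ?_)
      rw [Real.norm_eq_abs, abs_of_nonneg (by positivity)]
      have : c y ^ 2 ≤ ‖x‖ ^ 2 := by
        rw [← sq_abs]
        exact pow_le_pow_left₀ (abs_nonneg _) (hcb y) 2
      linarith
    have hq2' : Integrable (fun y => c y ^ 2) (advMeasure a 0 k) := by
      have := hq2.const_mul 2
      refine this.congr (ae_of_all _ fun y => ?_)
      ring
    -- inner integral for ell
    have hinner : ∀ y, ∫ t, ell a x (k + 1) (Fin.snoc y t) ∂(gaussianReal 0 1)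
        = ell a x k y - c y ^ 2 / 2 := by
      intro y
      have hrw : (fun t => ell a x (k + 1) (Fin.snoc y t))
          = fun t => (ell a x k y - c y ^ 2 / 2) + c y * t := by
        funext t
        rw [ell_snoc]
        ring
      rw [hrw, integral_add (integrable_const _) (integrable_id_G0.const_mul _),
        integral_const, integral_const_mul, integral_id_G0]
      simp
    -- integral identity for ell
    have hEq1 : ∫ z, ell a x (k + 1) z ∂(advMeasure a 0 (k + 1))
        = ∫ y, ell a x k y ∂(advMeasure a 0 k)
          - ∫ y, c y ^ 2 / 2 ∂(advMeasure a 0 k) := by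
      rw [integral_snoc a k _ (measurable_ell a x (k + 1) hk) hF]
      simp only [hinner]
      exact integral_sub IH1 hq2
    -- integral identity for qx
    have hqmeas1 : Measurable (qx a x (k + 1)) := measurable_qx a x (k + 1) hk
    have hGq : Integrable (fun p : (Fin k → ℝ) × ℝ => qx a x (k + 1) (Fin.snoc p.1 p.2))
        ((advMeasure a 0 k).prod (gaussianReal 0 1)) := by
      have hfunq : (fun p : (Fin k → ℝ) × ℝ => qx a x k p.1 + c p.1 ^ 2)
          = fun p : (Fin k → ℝ) × ℝ => qx a x (k + 1) (Fin.snoc p.1 p.2) :=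
        funext fun p => (qx_snoc a x k p.1 p.2).symm
      have hq1 : Integrable (fun p : (Fin k → ℝ) × ℝ => qx a x k p.1)
          ((advMeasure a 0 k).prod (gaussianReal 0 1)) :=
        integrable_comp_fst a k _ (measurable_qx a x k hk') (integrable_qx a x k hk' hb')
      have hq3 : Integrable (fun p : (Fin k → ℝ) × ℝ => c p.1 ^ 2)
          ((advMeasure a 0 k).prod (gaussianReal 0 1)) := by
        have := h3.const_mul 2
        refine this.congr (ae_of_all _ fun p => ?_)
        ring
      exact hfunq ▸ (hq1.add hq3)
    have hEq2 : ∫ z, qx a x (k + 1) z ∂(advMeasure a 0 (k + 1))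
        = ∫ y, qx a x k y ∂(advMeasure a 0 k) + ∫ y, c y ^ 2 ∂(advMeasure a 0 k) := by
      rw [integral_snoc a k _ hqmeas1 hGq]
      have hinq : ∀ y : Fin k → ℝ, ∫ t, qx a x (k + 1) (Fin.snoc y t) ∂(gaussianReal 0 1)
          = qx a x k y + c y ^ 2 := by
        intro y
        have : (fun t => qx a x (k + 1) (Fin.snoc y t)) = fun _ => qx a x k y + c y ^ 2 :=
          funext fun t => qx_snoc a x k y t
        rw [this, integral_const]
        simp
      simp only [hinq]
      exact integral_add (integrable_qx a x k hk' hb') hq2'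
    refine ⟨IE1, ?_⟩
    rw [hEq1, hEq2, IH3]
    have : ∫ y, c y ^ 2 / 2 ∂(advMeasure a 0 k)
        = (∫ y, c y ^ 2 ∂(advMeasure a 0 k)) / 2 := integral_div _ _
    rw [this]
    ring

/-- The mixture over a finite index set as a density w.r.t. the null measure. -/
lemma mixture_eq_withDensity (m : ℕ) (μr : ℝ) (J : Finset (Fin n)) (hn0 : 0 < n)
    (hk : ∀ i, i < m → Measurable (a i)) :
    ((2 : ℝ≥0∞) / n) • ∑ j ∈ J, advMeasure a (EuclideanSpace.single j μr) m
      = (advMeasure a 0 m).withDensity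
          (fun y => ENNReal.ofReal
            ((2 / (n : ℝ)) * ∑ j ∈ J, Real.exp (ell a (EuclideanSpace.single j μr) m y))) := by
  have hD : ∀ j : Fin n, Measurable
      (fun y => ENNReal.ofReal (Real.exp (ell a (EuclideanSpace.single j μr) m y))) :=
    fun j => (Real.measurable_exp.comp (measurable_ell a _ m hk)).ennreal_ofReal
  have h1 : ∀ j ∈ J, advMeasure a (EuclideanSpace.single j μr) m
      = (advMeasure a 0 m).withDensity
          (fun y => ENNReal.ofReal (Real.exp (ell a (EuclideanSpace.single j μr) m y))) :=
    fun j _ => advMeasure_eq a _ m hk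
  rw [Finset.sum_congr rfl h1]
  have h2 : ∑ j ∈ J, (advMeasure a 0 m).withDensity
        (fun y => ENNReal.ofReal (Real.exp (ell a (EuclideanSpace.single j μr) m y)))
      = (advMeasure a 0 m).withDensity
          (fun y => ∑ j ∈ J, ENNReal.ofReal (Real.exp (ell a (EuclideanSpace.single j μr) m y))) := by
    ext s hs
    rw [Measure.finset_sum_apply, withDensity_apply _ hs]
    have := fun j (_ : j ∈ J) => (withDensity_apply
      (fun y => ENNReal.ofReal (Real.exp (ell a (EuclideanSpace.single j μr) m y))) hs
      (μ := advMeasure a 0 m))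
    rw [Finset.sum_congr rfl this, ← lintegral_finset_sum]
    exact fun j _ => hD j
  rw [h2]
  have h3 : ((2 : ℝ≥0∞) / n) • (advMeasure a 0 m).withDensity
        (fun y => ∑ j ∈ J, ENNReal.ofReal (Real.exp (ell a (EuclideanSpace.single j μr) m y)))
      = (advMeasure a 0 m).withDensity
          (fun y => ((2 : ℝ≥0∞) / n) *
            ∑ j ∈ J, ENNReal.ofReal (Real.exp (ell a (EuclideanSpace.single j μr) m y))) := by
    rw [← withDensity_smul _ (Finset.measurable_sum _ fun j _ => hD j)]
    rfl
  rw [h3]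
  congr 1
  funext y
  rw [ENNReal.ofReal_mul (by positivity), ENNReal.ofReal_sum_of_nonneg
    (fun j _ => Real.exp_nonneg _)]
  congr 1
  rw [ENNReal.ofReal_div_of_pos (by exact_mod_cast hn0)]
  norm_num

lemma klDiv_mixture_le (m : ℕ) (μr : ℝ) (J : Finset (Fin n)) (hn0 : 0 < n) (hn2 : 2 ≤ n)
    (hJ : J.Nonempty) (hcard : ((J.card : ℝ)) * (2 / n) = 1)
    (hk : ∀ i, i < m → Measurable (a i)) (hb : ∀ i, i < m → ∀ z, ‖a i z‖ ≤ 1) :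
    klDiv (advMeasure a 0 m)
        (((2 : ℝ≥0∞) / n) • ∑ j ∈ J, advMeasure a (EuclideanSpace.single j μr) m)
      ≤ ENNReal.ofReal (∑ j ∈ J, (2 / (n : ℝ)) * ((1/2) *
          ∫ y, qx a (EuclideanSpace.single j μr) m y ∂(advMeasure a 0 m))) := by
  haveI := isProb_P0 a m
  set P0 := advMeasure a 0 m with hP0
  set G : (Fin m → ℝ) → ℝ :=
    fun y => (2 / (n : ℝ)) * ∑ j ∈ J, Real.exp (ell a (EuclideanSpace.single j μr) m y)
    with hGdef
  have hnR : (0 : ℝ) < n := by exact_mod_cast hn0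
  have hw_pos : (0 : ℝ) < 2 / n := by positivity
  have hw_le : (2 : ℝ) / n ≤ 1 := by
    rw [div_le_one hnR]; exact_mod_cast hn2
  have hGmeas : Measurable G :=
    (Finset.measurable_sum _ fun j _ =>
      Real.measurable_exp.comp (measurable_ell a _ m hk)).const_mul _
  have hGpos : ∀ y, 0 < G y :=
    fun y => mul_pos hw_pos (Finset.sum_pos (fun j _ => Real.exp_pos _) hJ)
  set g : (Fin m → ℝ) → ℝ≥0∞ := fun y => ENNReal.ofReal (G y) with hgdef
  have hgmeas : Measurable g := hGmeas.ennreal_ofReal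
  have hgne0 : ∀ y, g y ≠ 0 := fun y => (ENNReal.ofReal_pos.mpr (hGpos y)).ne'
  have hgfin : ∀ y, g y ≠ ∞ := fun y => ENNReal.ofReal_ne_top
  have hPr : ((2 : ℝ≥0∞) / n) • ∑ j ∈ J, advMeasure a (EuclideanSpace.single j μr) m
      = P0.withDensity g := mixture_eq_withDensity a m μr J hn0 hk
  haveI hfin : IsFiniteMeasure (P0.withDensity g) := by
    rw [← hPr]
    constructor
    rw [Measure.smul_apply, Measure.finset_sum_apply]
    have h1 : ∀ j ∈ J, advMeasure a (EuclideanSpace.single j μr) m Set.univ = 1 :=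
      fun j _ => (isProb_adv a _ m hk).measure_univ
    rw [Finset.sum_congr rfl h1, Finset.sum_const, smul_eq_mul, nsmul_eq_mul, mul_one]
    have hne : (n : ℝ≥0∞) ≠ 0 := by exact_mod_cast hn0.ne'
    exact ENNReal.mul_lt_top (ENNReal.div_lt_top (by norm_num) hne) (ENNReal.natCast_lt_top _)
  rw [hPr]
  have hac : P0 ≪ P0.withDensity g :=
    withDensity_absolutelyContinuous' hgmeas.aemeasurable (ae_of_all _ hgne0)
  have hrd : P0.rnDeriv (P0.withDensity g) =ᵐ[P0] fun y => (g y)⁻¹ := by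
    have h0 : (P0.withDensity g).withDensity g⁻¹ = P0 :=
      withDensity_inv_same hgmeas (ae_of_all _ hgne0) (ae_of_all _ hgfin)
    have h1 := Measure.rnDeriv_withDensity (P0.withDensity g) hgmeas.inv
    rw [h0] at h1
    exact h1.filter_mono hac.ae_le
  have hlog : (fun y => Real.log ((P0.rnDeriv (P0.withDensity g) y)).toReal)
      =ᵐ[P0] fun y => -Real.log (G y) := by
    filter_upwards [hrd] with y hy
    rw [hy, ENNReal.toReal_inv, hgdef, ENNReal.toReal_ofReal (hGpos y).le, Real.log_inv]
  -- integrability bounds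
  set T : (Fin m → ℝ) → ℝ := fun y => ∑ j ∈ J, |ell a (EuclideanSpace.single j μr) m y|
    with hTdef
  have hellint : ∀ j : Fin n, Integrable (ell a (EuclideanSpace.single j μr) m) P0 :=
    fun j => (key a _ m hk hb).1
  have hTint : Integrable T P0 := integrable_finset_sum _ fun j _ => (hellint j).abs
  have hJen : ∀ y, ∑ j ∈ J, (2 / (n : ℝ)) * ell a (EuclideanSpace.single j μr) m y
      ≤ Real.log (G y) := by
    intro y
    rw [Real.le_log_iff_exp_le (hGpos y)]
    have h := convexOn_exp.map_sum_le (t := J)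
      (w := fun _ => (2 : ℝ) / n)
      (p := fun j => ell a (EuclideanSpace.single j μr) m y)
      (fun j _ => hw_pos.le)
      (by rw [Finset.sum_const, nsmul_eq_mul]; linear_combination hcard)
      (fun j _ => Set.mem_univ _)
    simp only [smul_eq_mul] at h
    refine h.trans (le_of_eq ?_)
    show _ = (2 / (n : ℝ)) * ∑ j ∈ J, Real.exp (ell a (EuclideanSpace.single j μr) m y)
    rw [Finset.mul_sum]
  have hup : ∀ y, Real.log (G y) ≤ T y := by
    intro y
    rw [Real.log_le_iff_le_exp (hGpos y)]
    have h1 : ∀ j ∈ J, Real.exp (ell a (EuclideanSpace.single j μr) m y)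
        ≤ Real.exp (T y) := by
      intro j hj
      apply Real.exp_le_exp.mpr
      refine (le_abs_self _).trans ?_
      exact Finset.single_le_sum
        (f := fun j => |ell a (EuclideanSpace.single j μr) m y|) (fun j _ => abs_nonneg _) hj
    calc G y ≤ (2 / (n : ℝ)) * ∑ _j ∈ J, Real.exp (T y) :=
          mul_le_mul_of_nonneg_left (Finset.sum_le_sum h1) hw_pos.le
      _ = Real.exp (T y) := by
          rw [Finset.sum_const, nsmul_eq_mul]
          linear_combination Real.exp (T y) * hcard
  have hlow : ∀ y, -(T y) ≤ Real.log (G y) := by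
    intro y
    refine le_trans ?_ (hJen y)
    rw [hTdef, ← Finset.sum_neg_distrib]
    refine Finset.sum_le_sum fun j hj => ?_
    have h2 : |(2 / (n : ℝ)) * ell a (EuclideanSpace.single j μr) m y|
        ≤ |ell a (EuclideanSpace.single j μr) m y| := by
      rw [abs_mul, abs_of_pos hw_pos]
      exact mul_le_of_le_one_left (abs_nonneg _) hw_le
    have h3 := neg_abs_le ((2 / (n : ℝ)) * ell a (EuclideanSpace.single j μr) m y)
    linarith
  have hφmeas : Measurable fun y => -Real.log (G y) :=
    (Real.measurable_log.comp hGmeas).neg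
  have hφint : Integrable (fun y => -Real.log (G y)) P0 := by
    refine Integrable.mono' hTint hφmeas.aestronglyMeasurable (ae_of_all _ fun y => ?_)
    rw [Real.norm_eq_abs, abs_neg]
    exact abs_le.mpr ⟨hlow y, hup y⟩
  have hint : Integrable
      (fun ω => Real.log ((P0.rnDeriv (P0.withDensity g) ω)).toReal) P0 :=
    hφint.congr hlog.symm
  rw [klDiv, if_pos ⟨hac, hint⟩]
  apply ENNReal.ofReal_le_ofReal
  rw [integral_congr_ae hlog]
  have hsubint : Integrable
      (fun y => ∑ j ∈ J, (2 / (n : ℝ)) * (-(ell a (EuclideanSpace.single j μr) m y))) P0 :=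
    integrable_finset_sum _ fun j _ => ((hellint j).neg.const_mul _)
  have hmono : ∫ y, -Real.log (G y) ∂P0
      ≤ ∫ y, ∑ j ∈ J, (2 / (n : ℝ)) * (-(ell a (EuclideanSpace.single j μr) m y)) ∂P0 := by
    refine integral_mono hφint hsubint fun y => ?_
    have h := neg_le_neg (hJen y)
    rw [← Finset.sum_neg_distrib] at h
    refine h.trans (le_of_eq ?_)
    exact Finset.sum_congr rfl fun j _ => by ring
  refine hmono.trans (le_of_eq ?_)
  have hres := integral_finset_sum (μ := P0) J
      (f := fun j y => (2 / (n : ℝ)) * (-(ell a (EuclideanSpace.single j μr) m y)))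
      (fun j _ => ((hellint j).neg.const_mul _))
  rw [hres]
  refine Finset.sum_congr rfl fun j _ => ?_
  rw [integral_const_mul, integral_neg, (key a _ m hk hb).2]
  ring

lemma sum_qx_le (m : ℕ) (μr : ℝ) (hb : ∀ i, i < m → ∀ z, ‖a i z‖ ≤ 1) (y : Fin m → ℝ) :
    ∑ j : Fin n, qx a (EuclideanSpace.single j μr) m y ≤ (m : ℝ) * μr ^ 2 := by
  have hswap : ∑ j : Fin n, qx a (EuclideanSpace.single j μr) m y
      = ∑ i : Fin m, ∑ j : Fin n, mcoef a (EuclideanSpace.single j μr) m i y ^ 2 := by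
    rw [Finset.sum_comm]
    rfl
  rw [hswap]
  have h1 : ∀ i : Fin m, ∑ j : Fin n, mcoef a (EuclideanSpace.single j μr) m i y ^ 2
      ≤ μr ^ 2 := by
    intro i
    have hcoef : ∀ j : Fin n, mcoef a (EuclideanSpace.single j μr) m i y
        = μr * (a i (restr i m y)) j := by
      intro j
      rw [show mcoef a (EuclideanSpace.single j μr) m i y
        = ⟪a (i : ℕ) (restr i m y), EuclideanSpace.single j μr⟫ from rfl]
      rw [EuclideanSpace.inner_single_right]
      simp
    have hv : ∑ j : Fin n, (a i (restr i m y)) j ^ 2 ≤ 1 := by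
      have hnle := restr_norm_le a i m y (hb i i.isLt)
      have hne := EuclideanSpace.norm_eq (a i (restr i m y))
      have h0 : (0 : ℝ) ≤ ∑ j : Fin n, ‖(a i (restr i m y)) j‖ ^ 2 :=
        Finset.sum_nonneg fun j _ => sq_nonneg _
      have hsum : ∑ j : Fin n, ‖(a i (restr i m y)) j‖ ^ 2 ≤ 1 := by
        have := Real.sq_sqrt h0
        rw [← this]
        refine pow_le_one₀ (Real.sqrt_nonneg _) ?_
        rw [← hne]
        exact hnle
      refine le_trans (le_of_eq ?_) hsum
      exact Finset.sum_congr rfl fun j _ => by rw [Real.norm_eq_abs, sq_abs]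
    calc ∑ j : Fin n, mcoef a (EuclideanSpace.single j μr) m i y ^ 2
        = μr ^ 2 * ∑ j : Fin n, (a i (restr i m y)) j ^ 2 := by
          rw [Finset.mul_sum]
          exact Finset.sum_congr rfl fun j _ => by rw [hcoef j]; ring
      _ ≤ μr ^ 2 * 1 := mul_le_mul_of_nonneg_left hv (sq_nonneg _)
      _ = μr ^ 2 := mul_one _
  calc ∑ i : Fin m, ∑ j : Fin n, mcoef a (EuclideanSpace.single j μr) m i y ^ 2
      ≤ ∑ _i : Fin m, μr ^ 2 := Finset.sum_le_sum fun i _ => h1 i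
    _ = (m : ℝ) * μr ^ 2 := by
        rw [Finset.sum_const, Finset.card_univ, Fintype.card_fin, nsmul_eq_mul]

end AdvAux

end

end AdvProof

open AdvAux in
/-- **KL bound for half-supported mixtures in the adaptive Gaussian measurement model.**
With `n` even, `J₁ = {1, …, n/2}`, `J₂ = {n/2+1, …, n}`, `μ > 0`, and
`P r = (2/n) ∑_{j ∈ J r} P_{(j)}` the uniform mixture over locations in `J r`,
`KL(P₀, P₁) + KL(P₀, P₂) ≤ μ² m / n`. -/
theorem klDiv_half_mixtures_le (n m : ℕ) (hn : Even n) (hn0 : 0 < n)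
    (a : (i : ℕ) → (Fin i → ℝ) → EuclideanSpace ℝ (Fin n))
    (ha_meas : ∀ i, i < m → Measurable (a i))
    (ha_norm : ∀ i, i < m → ∀ y, ‖a i y‖ ≤ 1)
    (μ : ℝ) (hμ : 0 < μ)
    (P₁ P₂ : Measure (Fin m → ℝ))
    (hP₁ : P₁ = ((2 : ℝ≥0∞) / n) •
      ∑ j ∈ Finset.univ.filter (fun j : Fin n => (j : ℕ) < n / 2),
        advMeasure a (EuclideanSpace.single j μ) m)
    (hP₂ : P₂ = ((2 : ℝ≥0∞) / n) •
      ∑ j ∈ Finset.univ.filter (fun j : Fin n => n / 2 ≤ (j : ℕ)),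
        advMeasure a (EuclideanSpace.single j μ) m) :
    klDiv (advMeasure a 0 m) P₁ + klDiv (advMeasure a 0 m) P₂ ≤
      ENNReal.ofReal (μ ^ 2 * (m : ℝ) / n) := by
  haveI := isProb_P0 a m
  have hn2 : 2 ≤ n := Nat.le_of_dvd hn0 hn.two_dvd
  have hnR : (0 : ℝ) < n := by exact_mod_cast hn0
  have hdiv2 : n / 2 * 2 = n := Nat.div_two_mul_two_of_even hn
  have hhalf_pos : 0 < n / 2 := Nat.div_pos hn2 (by norm_num)
  have hhalf_lt : n / 2 < n := Nat.div_lt_self hn0 one_lt_two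
  set J₁ := Finset.univ.filter (fun j : Fin n => (j : ℕ) < n / 2) with hJ₁def
  set J₂ := Finset.univ.filter (fun j : Fin n => n / 2 ≤ (j : ℕ)) with hJ₂def
  -- cardinalities
  have hcard1 : J₁.card = n / 2 := by
    have h : J₁ = Finset.Iio (⟨n / 2, hhalf_lt⟩ : Fin n) := by
      ext j
      simp [hJ₁def, Fin.lt_def]
    rw [h, Fin.card_Iio]
  have hJ₂eq : J₂ = Finset.univ.filter (fun j : Fin n => ¬ ((j : ℕ) < n / 2)) := by
    ext j
    simp [hJ₂def, not_lt]
  have hcard2 : J₂.card = n / 2 := by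
    have h := Finset.card_filter_add_card_filter_not
      (s := (Finset.univ : Finset (Fin n))) (p := fun j : Fin n => (j : ℕ) < n / 2)
    rw [← hJ₁def, Finset.card_univ, Fintype.card_fin] at h
    rw [hJ₂eq]
    omega
  have hcardR : ∀ J : Finset (Fin n), J.card = n / 2 → ((J.card : ℝ)) * (2 / n) = 1 := by
    intro J hc
    rw [hc]
    have h2 : ((n / 2 : ℕ) : ℝ) * 2 = n := by exact_mod_cast hdiv2
    field_simp
    linarith
  have hne1 : J₁.Nonempty := ⟨⟨0, hn0⟩, by simp [hJ₁def, hhalf_pos]⟩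
  have hne2 : J₂.Nonempty := ⟨⟨n / 2, hhalf_lt⟩, by simp [hJ₂def]⟩
  -- apply the mixture bound
  have h1 := klDiv_mixture_le a m μ J₁ hn0 hn2 hne1 (hcardR J₁ hcard1) ha_meas ha_norm
  have h2 := klDiv_mixture_le a m μ J₂ hn0 hn2 hne2 (hcardR J₂ hcard2) ha_meas ha_norm
  rw [hP₁, hP₂]
  refine le_trans (add_le_add h1 h2) ?_
  -- nonnegativity of the bounds
  have hqint : ∀ j : Fin n, Integrable (qx a (EuclideanSpace.single j μ) m)
      (advMeasure a 0 m) := fun j => integrable_qx a _ m ha_meas ha_norm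
  have hqnn : ∀ j : Fin n,
      0 ≤ ∫ y, qx a (EuclideanSpace.single j μ) m y ∂(advMeasure a 0 m) :=
    fun j => integral_nonneg fun y => qx_nonneg a _ m y
  set F : Fin n → ℝ := fun j => (2 / (n : ℝ)) * ((1/2) *
    ∫ y, qx a (EuclideanSpace.single j μ) m y ∂(advMeasure a 0 m)) with hFdef
  have hFnn : ∀ j, 0 ≤ F j := fun j => by
    have := hqnn j
    positivity
  rw [← ENNReal.ofReal_add (Finset.sum_nonneg fun j _ => hFnn j)
    (Finset.sum_nonneg fun j _ => hFnn j)]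
  apply ENNReal.ofReal_le_ofReal
  -- combine the two sums
  have hsplit : ∑ j ∈ J₁, F j + ∑ j ∈ J₂, F j = ∑ j : Fin n, F j := by
    rw [hJ₂eq, hJ₁def]
    exact Finset.sum_filter_add_sum_filter_not _ _ _
  rw [hsplit]
  have hFsum : ∑ j : Fin n, F j = (1 / (n : ℝ)) *
      ∫ y, ∑ j : Fin n, qx a (EuclideanSpace.single j μ) m y ∂(advMeasure a 0 m) := by
    rw [integral_finset_sum _ (fun j _ => hqint j), Finset.mul_sum]
    exact Finset.sum_congr rfl fun j _ => by rw [hFdef]; ring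
  rw [hFsum]
  have hbnd : ∫ y, ∑ j : Fin n, qx a (EuclideanSpace.single j μ) m y ∂(advMeasure a 0 m)
      ≤ (m : ℝ) * μ ^ 2 := by
    have hic : Integrable (fun _ : Fin m → ℝ => (m : ℝ) * μ ^ 2) (advMeasure a 0 m) :=
      integrable_const _
    have him : Integrable (fun y => ∑ j : Fin n, qx a (EuclideanSpace.single j μ) m y)
        (advMeasure a 0 m) := integrable_finset_sum _ fun j _ => hqint j
    refine le_trans (integral_mono him hic fun y => sum_qx_le a m μ ha_norm y) ?_
    rw [integral_const]
    simp
  have h0 : (0 : ℝ) ≤ 1 / (n : ℝ) := by positivity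
  calc (1 / (n : ℝ)) * ∫ y, ∑ j : Fin n, qx a (EuclideanSpace.single j μ) m y
        ∂(advMeasure a 0 m)
      ≤ (1 / (n : ℝ)) * ((m : ℝ) * μ ^ 2) := mul_le_mul_of_nonneg_left hbnd h0
    _ = μ ^ 2 * (m : ℝ) / n := by ring
end
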